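/- Given a cartesian left-k-linear category 𝒜, the Faà di Bruno category Faà(𝒜) — with the same objects as 𝒜, morphisms A ⇝ B being ℕ-indexed families f^{(n)} : A × Aⁿ → B each symmetric and k-linear in its last n variables, identities given by (id)^{(0)} = id, (id)^{(1)} = π₁, (id)^{(n)} = 0 for n ≥ 2, and composition given by the Faà di Bruno formula — is a category. -/

import Mathlib

universe u

open Finset

/-- Unordered partitions of `Fin n` into nonempty parts, as a `Finset`. -/
def partitions (n : ℕ) : Finset (Finset (Finset (Fin n))) :=
  Finset.univ.filter fun P =>
    (∅ ∉ P) ∧ ∀ i : Fin n, (P.filter fun s => i ∈ s).card = 1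

/-- Partial injections from `Fin m` to `Fin n` (partial isomorphisms `[m] ≃ [n]`). -/
def partialInjs (m n : ℕ) : Finset (Fin m → Option (Fin n)) :=
  Finset.univ.filter fun θ =>
    ∀ i j : Fin m, ∀ a : Fin n, θ i = some a → θ j = some a → i = j

/-- The arrangement (Notation 5) associated to a partial isomorphism `θ : [m] ≃ [n]`:
the tail of the list `x_{θ₍₁₎θ₍₂₎}`, i.e. everything after the leading entry `(0,0)`:
matched pairs `(i, θ i)`, then unmatched rows `(i, 0)`, then unmatched columns `(0, j)`. -/
def arrangeTail (m n : ℕ) (θ : Fin m → Option (Fin n)) :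
    List (Fin (m + 1) × Fin (n + 1)) :=
  ((List.finRange m).filterMap fun i => (θ i).map fun j => (i.succ, j.succ))
    ++ ((List.finRange m).filterMap fun i =>
          if θ i = none then some (i.succ, (0 : Fin (n + 1))) else none)
    ++ ((List.finRange n).filterMap fun j =>
          if ∀ i, θ i ≠ some j then some ((0 : Fin (m + 1)), j.succ) else none)

variable (k : Type u) [CommSemiring k]

/-- The data of a cartesian left-`k`-linear category. -/
structure CDCData where
  Obj : Type u
  Hom : Obj → Obj → Type u
  homAdd : ∀ A B, AddCommMonoid (Hom A B)
  homMod : ∀ A B, @Module k (Hom A B) inferInstance (homAdd A B)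
  id : ∀ A, Hom A A
  comp : ∀ {A B C}, Hom B C → Hom A B → Hom A C
  term : Obj
  toTerm : ∀ A, Hom A term
  prod : Obj → Obj → Obj
  fst : ∀ {A B}, Hom (prod A B) A
  snd : ∀ {A B}, Hom (prod A B) B
  pair : ∀ {Z A B}, Hom Z A → Hom Z B → Hom Z (prod A B)

variable {k}

instance (C : CDCData k) (A B : C.Obj) : AddCommMonoid (C.Hom A B) := C.homAdd A B
instance (C : CDCData k) (A B : C.Obj) : Module k (C.Hom A B) := C.homMod A B

namespace CDCData

/-- `dom A n` is the `(n+1)`-fold product `A × Aⁿ`, nested on the left. -/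
def dom (C : CDCData k) (A : C.Obj) : ℕ → C.Obj
  | 0 => A
  | n + 1 => C.prod (dom C A n) A

/-- Tupling of `n+1` generalized elements of `A` into `A × Aⁿ`. -/
def tupleD (C : CDCData k) {Z A : C.Obj} :
    (n : ℕ) → (Fin (n + 1) → C.Hom Z A) → C.Hom Z (C.dom A n)
  | 0, x => x 0
  | n + 1, x => C.pair (tupleD C n fun i => x i.castSucc) (x (Fin.last (n + 1)))

/-- Tupling of a head together with a list; the head of the list lands in the
*last* slot. -/
def tupList (C : CDCData k) {Z A : C.Obj} (x0 : C.Hom Z A) :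
    (L : List (C.Hom Z A)) → C.Hom Z (C.dom A L.length)
  | [] => x0
  | a :: L => C.pair (tupList C x0 L) a

/-- Zero-padding `v` into the first slot of `A × Aⁿ`. -/
def zpad (C : CDCData k) {Z A : C.Obj} : (n : ℕ) → C.Hom Z A → C.Hom Z (C.dom A n)
  | 0, v => v
  | n + 1, v => C.pair (zpad C n v) 0

/-- The `i`-th projection `A × Aⁿ → A`. -/
def projD (C : CDCData k) {A : C.Obj} : (n : ℕ) → Fin (n + 1) → C.Hom (C.dom A n) A
  | 0, _ => C.id A
  | n + 1, i => Fin.lastCases C.snd (fun j => C.comp (projD C n j) C.fst) i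

/-- The `2ⁿ`-fold product of `A`. -/
def twoPow (C : CDCData k) (A : C.Obj) : ℕ → C.Obj
  | 0 => A
  | n + 1 => C.prod (twoPow C A n) (twoPow C A n)

/-- Tupling of a family indexed by `Fin n → Bool` (characteristic functions of
subsets of `[n]`) into `A^(2ⁿ)`; the last bit is the outermost product factor. -/
def cube (C : CDCData k) {Z A : C.Obj} :
    (n : ℕ) → ((Fin n → Bool) → C.Hom Z A) → C.Hom Z (C.twoPow A n)
  | 0, x => x fun i => i.elim0
  | n + 1, x =>
      C.pair (cube C n fun b => x (Fin.snoc b false))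
        (cube C n fun b => x (Fin.snoc b true))

/-- The subset of `Fin n` with characteristic function `b`. -/
def bset {n : ℕ} (b : Fin n → Bool) : Finset (Fin n) :=
  Finset.univ.filter fun i => b i = true

end CDCData

variable (k)

/-- A (`k`-linear) cartesian differential category, presented via generalized
elements. -/
structure CDC extends CDCData k where
  id_comp : ∀ {A B} (f : Hom A B), comp (id B) f = f
  comp_id : ∀ {A B} (f : Hom A B), comp f (id A) = f
  comp_assoc : ∀ {A B C D} (h : Hom C D) (g : Hom B C) (f : Hom A B),
    comp (comp h g) f = comp h (comp g f)
  -- left `k`-linearity: precomposition is `k`-linear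
  add_comp : ∀ {A B C} (g h : Hom B C) (f : Hom A B),
    comp (g + h) f = comp g f + comp h f
  smul_comp : ∀ {A B C} (r : k) (g : Hom B C) (f : Hom A B),
    comp (r • g) f = r • comp g f
  zero_comp : ∀ {A B C} (f : Hom A B), comp (0 : Hom B C) f = (0 : Hom A C)
  -- cartesian structure
  toTerm_unique : ∀ {A} (f : Hom A term), f = toTerm A
  fst_pair : ∀ {Z A B} (f : Hom Z A) (g : Hom Z B), comp fst (pair f g) = f
  snd_pair : ∀ {Z A B} (f : Hom Z A) (g : Hom Z B), comp snd (pair f g) = g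
  pair_unique : ∀ {Z A B} (h : Hom Z (prod A B)), pair (comp fst h) (comp snd h) = h
  -- the projections are `k`-linear
  fst_comp_add : ∀ {Z A B} (x y : Hom Z (prod A B)),
    comp fst (x + y) = comp fst x + comp fst y
  fst_comp_smul : ∀ {Z A B} (r : k) (x : Hom Z (prod A B)),
    comp fst (r • x) = r • comp fst x
  snd_comp_add : ∀ {Z A B} (x y : Hom Z (prod A B)),
    comp snd (x + y) = comp snd x + comp snd y
  snd_comp_smul : ∀ {Z A B} (r : k) (x : Hom Z (prod A B)),
    comp snd (r • x) = r • comp snd x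
  -- the differential operator
  D : ∀ {A B}, Hom A B → Hom (prod A A) B
  -- (i) D is k-linear
  D_add : ∀ {A B} (f g : Hom A B), D (f + g) = D f + D g
  D_smul : ∀ {A B} (r : k) (f : Hom A B), D (r • f) = r • D f
  -- (ii) D f is k-linear in its second argument
  D_arg_add : ∀ {Z A B} (f : Hom A B) (x u v : Hom Z A),
    comp (D f) (pair x (u + v)) = comp (D f) (pair x u) + comp (D f) (pair x v)
  D_arg_smul : ∀ {Z A B} (f : Hom A B) (r : k) (x u : Hom Z A),
    comp (D f) (pair x (r • u)) = r • comp (D f) (pair x u)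
  -- (iii) D of projections
  D_fst : ∀ {A B}, D (fst (A := A) (B := B)) = comp fst snd
  D_snd : ∀ {A B}, D (snd (A := A) (B := B)) = comp snd snd
  -- (iv) D of identities
  D_id : ∀ {A}, D (id A) = snd
  -- (v) the chain rule
  D_comp : ∀ {A B C} (g : Hom B C) (f : Hom A B),
    D (comp g f) = comp (D g) (pair (comp f fst) (D f))
  -- (vi) D f is D-linear in its first argument
  D_lin : ∀ {Z A B} (f : Hom A B) (x r v : Hom Z A),
    comp (D (D f)) (pair (pair x r) (pair 0 v)) = comp (D f) (pair x v)
  -- (vii) symmetry of the second derivative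
  D_sym : ∀ {Z A B} (f : Hom A B) (x r s : Hom Z A),
    comp (D (D f)) (pair (pair x r) (pair s 0)) =
      comp (D (D f)) (pair (pair x s) (pair r 0))

variable {k}

namespace CDC

/-- The `n`-th derivative `f⁽ⁿ⁾ = (D₁)ⁿ f : A × Aⁿ → B`. -/
def fDeriv (C : CDC k) {A B : C.Obj} (f : C.Hom A B) :
    (n : ℕ) → C.Hom (C.toCDCData.dom A n) B
  | 0 => f
  | n + 1 =>
      C.comp (C.D (fDeriv C f n)) (C.pair C.fst (C.toCDCData.zpad n C.snd))

/-- The iterated differential `Dⁿ f : A^(2ⁿ) → B`. -/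
def iterD (C : CDC k) {A B : C.Obj} (f : C.Hom A B) :
    (n : ℕ) → C.Hom (C.toCDCData.twoPow A n) B
  | 0 => f
  | n + 1 => C.D (iterD C f n)

/-- `f^{(I)}` for `I ⊆ [n]` (Definition 13). -/
def fIdx (C : CDC k) {A B : C.Obj} (f : C.Hom A B) (n : ℕ) (I : Finset (Fin n)) :
    C.Hom (C.toCDCData.dom A n) B :=
  C.comp (fDeriv C f I.card)
    (C.toCDCData.tupleD I.card
      (Fin.cases (C.toCDCData.projD n 0)
        fun j => C.toCDCData.projD n (Fin.succ ((I.orderIsoOfFin rfl j : Fin n)))))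

end CDC


variable (k)

/-- A cartesian left-`k`-linear category. -/
structure CLC extends CDCData k where
  id_comp : ∀ {A B} (f : Hom A B), comp (id B) f = f
  comp_id : ∀ {A B} (f : Hom A B), comp f (id A) = f
  comp_assoc : ∀ {A B C D} (h : Hom C D) (g : Hom B C) (f : Hom A B),
    comp (comp h g) f = comp h (comp g f)
  add_comp : ∀ {A B C} (g h : Hom B C) (f : Hom A B),
    comp (g + h) f = comp g f + comp h f
  smul_comp : ∀ {A B C} (r : k) (g : Hom B C) (f : Hom A B),
    comp (r • g) f = r • comp g f
  zero_comp : ∀ {A B C} (f : Hom A B), comp (0 : Hom B C) f = (0 : Hom A C)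
  toTerm_unique : ∀ {A} (f : Hom A term), f = toTerm A
  fst_pair : ∀ {Z A B} (f : Hom Z A) (g : Hom Z B), comp fst (pair f g) = f
  snd_pair : ∀ {Z A B} (f : Hom Z A) (g : Hom Z B), comp snd (pair f g) = g
  pair_unique : ∀ {Z A B} (h : Hom Z (prod A B)), pair (comp fst h) (comp snd h) = h
  fst_comp_add : ∀ {Z A B} (x y : Hom Z (prod A B)),
    comp fst (x + y) = comp fst x + comp fst y
  fst_comp_smul : ∀ {Z A B} (r : k) (x : Hom Z (prod A B)),
    comp fst (r • x) = r • comp fst x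
  snd_comp_add : ∀ {Z A B} (x y : Hom Z (prod A B)),
    comp snd (x + y) = comp snd x + comp snd y
  snd_comp_smul : ∀ {Z A B} (r : k) (x : Hom Z (prod A B)),
    comp snd (r • x) = r • comp snd x

variable {k}

/-- The underlying data of a morphism `A ⇝ B` of the Faà di Bruno category: an
`ℕ`-indexed family of maps `f⁽ⁿ⁾ : A × Aⁿ → B`. -/
abbrev FaaHom (C : CLC k) (A B : C.Obj) : Type u :=
  ∀ n : ℕ, C.Hom (C.toCDCData.dom A n) B

/-- The condition that the family `f⁽ⁿ⁾` is symmetric and `k`-linear in its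
last `n` variables, expressed via generalized elements. -/
def IsFaa (C : CLC k) {A B : C.Obj} (f : FaaHom C A B) : Prop :=
  (∀ (n : ℕ) (Z : C.Obj) (x : Fin (n + 1) → C.Hom Z A) (σ : Equiv.Perm (Fin n)),
      C.comp (f n)
          (C.toCDCData.tupleD n
            (fun i => Fin.cases (x 0) (fun j => x ((σ j).succ)) i)) =
        C.comp (f n) (C.toCDCData.tupleD n x)) ∧
  (∀ (n : ℕ) (Z : C.Obj) (x : Fin (n + 1) → C.Hom Z A) (i : Fin n)
      (u v : C.Hom Z A),
      C.comp (f n) (C.toCDCData.tupleD n (Function.update x i.succ (u + v))) =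
        C.comp (f n) (C.toCDCData.tupleD n (Function.update x i.succ u)) +
          C.comp (f n) (C.toCDCData.tupleD n (Function.update x i.succ v))) ∧
  (∀ (n : ℕ) (Z : C.Obj) (x : Fin (n + 1) → C.Hom Z A) (i : Fin n) (r : k)
      (u : C.Hom Z A),
      C.comp (f n) (C.toCDCData.tupleD n (Function.update x i.succ (r • u))) =
        r • C.comp (f n) (C.toCDCData.tupleD n (Function.update x i.succ u)))

/-- `f^{(I)}` for a Faà di Bruno family. -/
def fIdxF (C : CLC k) {A B : C.Obj} (f : FaaHom C A B) (n : ℕ)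
    (I : Finset (Fin n)) : C.Hom (C.toCDCData.dom A n) B :=
  C.comp (f I.card)
    (C.toCDCData.tupleD I.card
      (Fin.cases (C.toCDCData.projD n 0)
        fun j => C.toCDCData.projD n (Fin.succ ((I.orderIsoOfFin rfl j : Fin n)))))

/-- Faà di Bruno composition (the higher-order chain rule). -/
noncomputable def faaComp (C : CLC k) {A B Cb : C.Obj} (g : FaaHom C B Cb) (f : FaaHom C A B) :
    FaaHom C A Cb := fun n =>
  ∑ P ∈ partitions n,
    C.comp (g P.toList.length)
      (C.toCDCData.tupleD P.toList.length
        (Fin.cases (fIdxF C f n ∅) fun j => fIdxF C f n (P.toList.get j)))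

/-- The Faà di Bruno identity: `(id)⁽⁰⁾ = id`, `(id)⁽¹⁾ = π₁`, `(id)⁽ⁿ⁾ = 0`
for `n ≥ 2`. -/
def idF (C : CLC k) (A : C.Obj) : FaaHom C A A := fun n =>
  match n with
  | 0 => C.id A
  | 1 => C.snd
  | _ + 2 => 0

/-! ### Infrastructure -/

section Infra

variable {k : Type u} [CommSemiring k] {C : CLC k}

namespace FaaAux

/-! #### Basic category-level lemmas -/

lemma pair_comp {Z Z' A B : C.Obj} (a : C.Hom Z A) (b : C.Hom Z B) (t : C.Hom Z' Z) :
    C.comp (C.pair a b) t = C.pair (C.comp a t) (C.comp b t) := by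
  conv_lhs => rw [← C.pair_unique (C.comp (C.pair a b) t)]
  rw [← C.comp_assoc, ← C.comp_assoc, C.fst_pair, C.snd_pair]

lemma tupleD_comp {Z Z' A : C.Obj} (n : ℕ) (y : Fin (n + 1) → C.Hom Z A) (t : C.Hom Z' Z) :
    C.comp (C.toCDCData.tupleD n y) t = C.toCDCData.tupleD n (fun i => C.comp (y i) t) := by
  induction n with
  | zero => rfl
  | succ n ih => exact (pair_comp _ _ _).trans (by rw [ih]; rfl)

lemma projD_tupleD {Z A : C.Obj} (n : ℕ) (x : Fin (n + 1) → C.Hom Z A) (i : Fin (n + 1)) :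
    C.comp (C.toCDCData.projD n i) (C.toCDCData.tupleD n x) = x i := by
  induction n with
  | zero =>
      have : i = 0 := Fin.eq_zero i
      subst this
      exact C.id_comp _
  | succ n ih =>
      cases i using Fin.lastCases with
      | last =>
          simp only [CDCData.projD]
          erw [Fin.lastCases_last]
          exact C.snd_pair _ _
      | cast i =>
          simp only [CDCData.projD, CDCData.tupleD]
          erw [Fin.lastCases_castSucc, C.comp_assoc, C.fst_pair, ih]

lemma tupleD_projD {A : C.Obj} (n : ℕ) :
    C.toCDCData.tupleD n (C.toCDCData.projD n) = C.id (C.toCDCData.dom A n) := by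
  induction n with
  | zero => rfl
  | succ n ih =>
      simp only [CDCData.tupleD, CDCData.projD]
      have h1 : (C.toCDCData.tupleD n fun i =>
          (Fin.lastCases C.snd (fun j => C.comp (C.toCDCData.projD n j) C.fst)
            (Fin.castSucc i) : C.Hom (C.toCDCData.dom A (n+1)) A)) =
          C.comp (C.toCDCData.tupleD n (C.toCDCData.projD n)) C.fst := by
        rw [tupleD_comp]
        congr 1
        funext i
        erw [Fin.lastCases_castSucc]
        rfl
      rw [h1, ih, C.id_comp]
      have h2 := C.pair_unique (C.id (C.toCDCData.dom A (n + 1)))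
      erw [C.comp_id, C.comp_id] at h2
      erw [Fin.lastCases_last]
      exact h2

lemma sum_comp {Z A B : C.Obj} {ι : Type*} (T : Finset ι) (F : ι → C.Hom A B)
    (t : C.Hom Z A) :
    C.comp (∑ s ∈ T, F s) t = ∑ s ∈ T, C.comp (F s) t := by
  classical
  induction T using Finset.induction_on with
  | empty => simpa using C.zero_comp t
  | insert _ _ h ih => rw [Finset.sum_insert h, Finset.sum_insert h, C.add_comp, ih]

/-! #### Core lemmas about Faà families -/

variable {A B : C.Obj}

/-- Pull `Function.update` through `Fin.cases`. -/
lemma cases_update {m : ℕ} {β : Type*} (x0 : β) (w : Fin m → β) (i : Fin m) (v : β) :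
    Function.update (Fin.cases x0 w : Fin (m + 1) → β) i.succ v
      = Fin.cases x0 (Function.update w i v) := by
  funext j
  cases j using Fin.cases with
  | zero => simp [Function.update_apply, (Fin.succ_ne_zero i).symm]
  | succ j =>
      by_cases h : j = i
      · subst h; simp
      · simp [Function.update_apply, h, Fin.succ_inj.ne.mpr h]

/-- Symmetry of a Faà family, in convenient form. -/
lemma symm_eval {f : FaaHom C A B} (hf : IsFaa C f) {Z : C.Obj} {m : ℕ}
    (x0 : C.Hom Z A) (w₁ w₂ : Fin m → C.Hom Z A) (σ : Equiv.Perm (Fin m))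
    (hw : ∀ j, w₁ j = w₂ (σ j)) :
    C.comp (f m) (C.toCDCData.tupleD m (Fin.cases x0 w₁)) =
      C.comp (f m) (C.toCDCData.tupleD m (Fin.cases x0 w₂)) := by
  have h := hf.1 m Z (Fin.cases x0 w₂) σ
  have hfun : (fun i => Fin.cases ((Fin.cases x0 w₂ : Fin (m+1) → C.Hom Z A) 0)
      (fun j => (Fin.cases x0 w₂ : Fin (m+1) → C.Hom Z A) ((σ j).succ)) i)
      = (Fin.cases x0 w₁ : Fin (m+1) → C.Hom Z A) := by
    funext i
    cases i using Fin.cases with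
    | zero => simp
    | succ j => simp [hw j]
  rw [hfun] at h
  exact h

/-- The evaluation of a Faà family at a fixed zeroth slot, as a multilinear map. -/
def mel {f : FaaHom C A B} (hf : IsFaa C f) {Z : C.Obj} (m : ℕ) (x0 : C.Hom Z A) :
    MultilinearMap k (fun _ : Fin m => C.Hom Z A) (C.Hom Z B) where
  toFun w := C.comp (f m) (C.toCDCData.tupleD m (Fin.cases x0 w))
  map_update_add' := by
    intro inst w i u v
    have hi : inst = instDecidableEqFin m := Subsingleton.elim _ _
    subst hi
    have e : ∀ v' : C.Hom Z A,
        (C.toCDCData.tupleD m fun j =>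
            (Fin.cases x0 (Function.update w i v') : Fin (m+1) → C.Hom Z A) j)
          = C.toCDCData.tupleD m (Function.update (Fin.cases x0 w) i.succ v') := by
      intro v'; congr 1; funext j; rw [cases_update]
    beta_reduce
    rw [e, e, e]
    exact hf.2.1 m Z (Fin.cases x0 w) i u v
  map_update_smul' := by
    intro inst w i r u
    have hi : inst = instDecidableEqFin m := Subsingleton.elim _ _
    subst hi
    have e : ∀ v' : C.Hom Z A,
        (C.toCDCData.tupleD m fun j =>
            (Fin.cases x0 (Function.update w i v') : Fin (m+1) → C.Hom Z A) j)
          = C.toCDCData.tupleD m (Function.update (Fin.cases x0 w) i.succ v') := by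
      intro v'; congr 1; funext j; rw [cases_update]
    beta_reduce
    rw [e, e]
    exact hf.2.2 m Z (Fin.cases x0 w) i r u

lemma mel_apply {f : FaaHom C A B} (hf : IsFaa C f) {Z : C.Obj} (m : ℕ)
    (x0 : C.Hom Z A) (w : Fin m → C.Hom Z A) :
    mel hf m x0 w = C.comp (f m) (C.toCDCData.tupleD m (Fin.cases x0 w)) := rfl

/-- Master reindexing lemma: evaluation of a Faà family only depends on the
(unordered) family of entries. -/
lemma master {f : FaaHom C A B} (hf : IsFaa C f) {Z : C.Obj} (x0 : C.Hom Z A)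
    {ι : Type*} (v : ι → C.Hom Z A) {m₁ m₂ : ℕ} (e₁ : Fin m₁ → ι) (e₂ : Fin m₂ → ι)
    (h₁ : Function.Injective e₁) (h₂ : Function.Injective e₂)
    (hr : ∀ a, (∃ i, e₁ i = a) ↔ (∃ j, e₂ j = a)) :
    C.comp (f m₁) (C.toCDCData.tupleD m₁ (Fin.cases x0 (fun j => v (e₁ j)))) =
      C.comp (f m₂) (C.toCDCData.tupleD m₂ (Fin.cases x0 (fun j => v (e₂ j)))) := by
  have hs : Set.range e₁ = Set.range e₂ := by
    ext a; exact hr a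
  have hm : m₁ = m₂ := by
    have := Fintype.card_congr
      ((Equiv.ofInjective e₁ h₁).trans ((Equiv.setCongr hs).trans
        (Equiv.ofInjective e₂ h₂).symm))
    simpa using this
  subst hm
  set σ : Equiv.Perm (Fin m₁) :=
    (Equiv.ofInjective e₁ h₁).trans ((Equiv.setCongr hs).trans
      (Equiv.ofInjective e₂ h₂).symm) with hσ
  apply symm_eval hf x0 _ _ σ
  intro j
  have : e₂ (σ j) = e₁ j := by
    have := (Equiv.ofInjective e₂ h₂).apply_symm_apply
      ⟨e₁ j, hs ▸ Set.mem_range_self j⟩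
    simpa [hσ, Equiv.ofInjective] using congrArg Subtype.val this
  rw [this]


/-! #### Evaluation forms -/

/-- `f^{(S)}` evaluated on generalized elements. -/
def phiF {Z A B : C.Obj} (f : FaaHom C A B) {n : ℕ} (x : Fin (n + 1) → C.Hom Z A)
    (S : Finset (Fin n)) : C.Hom Z B :=
  C.comp (f S.card) (C.toCDCData.tupleD S.card
    (Fin.cases (x 0) (fun j => x ((S.orderIsoOfFin rfl j : Fin n)).succ)))

/-- A single Faà-composition term, evaluated on generalized elements, for a
set `G` of parts. -/
noncomputable def gev {Z A B Cb : C.Obj} (g : FaaHom C B Cb) (f : FaaHom C A B) {n : ℕ}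
    (x : Fin (n + 1) → C.Hom Z A) (G : Finset (Finset (Fin n))) : C.Hom Z Cb :=
  C.comp (g G.toList.length) (C.toCDCData.tupleD G.toList.length
    (Fin.cases (C.comp (f 0) (x 0)) (fun j => phiF f x (G.toList.get j))))

lemma phiF_empty {Z A B : C.Obj} (f : FaaHom C A B) {n : ℕ}
    (x : Fin (n + 1) → C.Hom Z A) : phiF f x (∅ : Finset (Fin n)) = C.comp (f 0) (x 0) := by
  simp [phiF, CDCData.tupleD]

lemma fIdxF_comp {Z A B : C.Obj} (f : FaaHom C A B) {n : ℕ} (S : Finset (Fin n))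
    (x : Fin (n + 1) → C.Hom Z A) :
    C.comp (fIdxF C f n S) (C.toCDCData.tupleD n x) = phiF f x S := by
  unfold fIdxF phiF
  rw [C.comp_assoc, tupleD_comp]
  congr 2
  funext i
  cases i using Fin.cases with
  | zero => simp [projD_tupleD]
  | succ j => simp [projD_tupleD]

lemma top_eval {Z A B Cb : C.Obj} (g : FaaHom C B Cb) (f : FaaHom C A B) {n : ℕ}
    (x : Fin (n + 1) → C.Hom Z A) :
    C.comp (faaComp C g f n) (C.toCDCData.tupleD n x)
      = ∑ P ∈ partitions n, gev g f x P := by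
  unfold faaComp
  rw [sum_comp]
  refine Finset.sum_congr rfl fun P _ => ?_
  rw [C.comp_assoc, tupleD_comp]
  unfold gev
  congr 2
  funext i
  cases i using Fin.cases with
  | zero =>
      simp only [Fin.cases_zero]
      rw [fIdxF_comp, phiF_empty]
  | succ j =>
      simp only [Fin.cases_succ]
      rw [fIdxF_comp]

lemma hom_ext {A B : C.Obj} {n : ℕ} {h₁ h₂ : C.Hom (C.toCDCData.dom A n) B}
    (h : C.comp h₁ (C.toCDCData.tupleD n (C.toCDCData.projD n))
        = C.comp h₂ (C.toCDCData.tupleD n (C.toCDCData.projD n))) : h₁ = h₂ := by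
  rwa [tupleD_projD, C.comp_id, C.comp_id] at h

/-! #### Partitions -/

def IsPart {n : ℕ} (S : Finset (Fin n)) (P : Finset (Finset (Fin n))) : Prop :=
  (∅ ∉ P) ∧ (∀ T ∈ P, T ⊆ S) ∧ ∀ i ∈ S, (P.filter fun s => i ∈ s).card = 1

lemma mem_partitions {n : ℕ} {P : Finset (Finset (Fin n))} :
    P ∈ partitions n ↔ IsPart Finset.univ P := by
  simp [partitions, IsPart]

def partitionsOn {n : ℕ} (S : Finset (Fin n)) : Finset (Finset (Finset (Fin n))) :=
  Finset.univ.filter fun P =>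
    (∅ ∉ P) ∧ (∀ T ∈ P, T ⊆ S) ∧ ∀ i ∈ S, (P.filter fun s => i ∈ s).card = 1

lemma mem_partitionsOn {n : ℕ} {S : Finset (Fin n)} {P : Finset (Finset (Fin n))} :
    P ∈ partitionsOn S ↔ IsPart S P := by
  simp [partitionsOn, IsPart]

namespace IsPart

variable {n : ℕ} {S : Finset (Fin n)} {P : Finset (Finset (Fin n))}

lemma notMem_empty (hP : IsPart S P) : ∅ ∉ P := hP.1

lemma nonempty_mem (hP : IsPart S P) {T} (hT : T ∈ P) : T.Nonempty := by
  rcases Finset.eq_empty_or_nonempty T with h | h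
  · exact absurd (h ▸ hT) hP.1
  · exact h

lemma mem_subset (hP : IsPart S P) {T} (hT : T ∈ P) : T ⊆ S := hP.2.1 T hT

lemma exists_mem (hP : IsPart S P) {a} (ha : a ∈ S) : ∃ T ∈ P, a ∈ T := by
  have h := hP.2.2 a ha
  have hpos : 0 < (P.filter fun s => a ∈ s).card := by omega
  obtain ⟨T, hT⟩ := Finset.card_pos.mp hpos
  exact ⟨T, (Finset.mem_filter.mp hT).1, (Finset.mem_filter.mp hT).2⟩

lemma eq_of_mem (hP : IsPart S P) {a : Fin n} {T₁ T₂} (h₁ : T₁ ∈ P) (h₂ : T₂ ∈ P)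
    (ha₁ : a ∈ T₁) (ha₂ : a ∈ T₂) : T₁ = T₂ := by
  have ha : a ∈ S := hP.2.1 T₁ h₁ ha₁
  exact Finset.card_le_one.mp (le_of_eq (hP.2.2 a ha))
    T₁ (Finset.mem_filter.mpr ⟨h₁, ha₁⟩) T₂ (Finset.mem_filter.mpr ⟨h₂, ha₂⟩)

end IsPart

lemma isPart_of {n : ℕ} {S : Finset (Fin n)} {P : Finset (Finset (Fin n))}
    (h0 : ∅ ∉ P) (hsub : ∀ T ∈ P, T ⊆ S)
    (hex : ∀ a ∈ S, ∃ T ∈ P, a ∈ T)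
    (huniq : ∀ (a : Fin n) (T₁ T₂ : Finset (Fin n)), T₁ ∈ P → T₂ ∈ P → a ∈ T₁ → a ∈ T₂ → T₁ = T₂) :
    IsPart S P := by
  refine ⟨h0, hsub, fun a ha => ?_⟩
  obtain ⟨T, hT, haT⟩ := hex a ha
  rw [Finset.card_eq_one]
  exact ⟨T, Finset.eq_singleton_iff_unique_mem.mpr ⟨Finset.mem_filter.mpr ⟨hT, haT⟩,
    fun T' hT' => huniq a T' T (Finset.mem_filter.mp hT').1 hT (Finset.mem_filter.mp hT').2 haT⟩⟩

/-! #### Lists and enumerations -/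

lemma toList_get_injective {α : Type*} (s : Finset α) : Function.Injective s.toList.get :=
  List.nodup_iff_injective_get.mp s.nodup_toList

lemma toList_get_mem {α : Type*} (s : Finset α) (j : Fin s.toList.length) :
    s.toList.get j ∈ s := Finset.mem_toList.mp (s.toList.get_mem j)

lemma exists_toList_get {α : Type*} {s : Finset α} {a : α} (h : a ∈ s) :
    ∃ j, s.toList.get j = a := List.mem_iff_get.mp (Finset.mem_toList.mpr h)

lemma orderIso_mem {n : ℕ} (s : Finset (Fin n)) (j : Fin s.card) :
    (s.orderIsoOfFin rfl j : Fin n) ∈ s := (s.orderIsoOfFin rfl j).2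

lemma exists_orderIso {n : ℕ} {s : Finset (Fin n)} {a : Fin n} (h : a ∈ s) :
    ∃ j, (s.orderIsoOfFin rfl j : Fin n) = a :=
  ⟨(s.orderIsoOfFin rfl).symm ⟨a, h⟩, by simp⟩

lemma orderIso_injective {n : ℕ} (s : Finset (Fin n)) :
    Function.Injective (fun j => (s.orderIsoOfFin rfl j : Fin n)) :=
  fun a b h => (s.orderIsoOfFin rfl).injective (Subtype.ext h)


/-- The canonical (monotone) enumeration of a `Finset (Fin n)`. -/
def enum {n : ℕ} (S : Finset (Fin n)) (j : Fin S.card) : Fin n :=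
  (S.orderIsoOfFin rfl j : Fin n)

lemma enum_mem {n : ℕ} (S : Finset (Fin n)) (j : Fin S.card) : enum S j ∈ S :=
  orderIso_mem S j

lemma exists_enum {n : ℕ} {S : Finset (Fin n)} {a : Fin n} (h : a ∈ S) :
    ∃ j, enum S j = a := exists_orderIso h

lemma enum_injective {n : ℕ} (S : Finset (Fin n)) : Function.Injective (enum S) :=
  orderIso_injective S

lemma phiF_def {Z A B : C.Obj} (f : FaaHom C A B) {n : ℕ} (x : Fin (n + 1) → C.Hom Z A)
    (S : Finset (Fin n)) :
    phiF f x S = C.comp (f S.card) (C.toCDCData.tupleD S.card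
      (Fin.cases (x 0) (fun j => x (enum S j).succ))) := rfl

/-- `phiF` only depends on the values of `x` at `0` and at `S`. -/
lemma phiF_congr {Z A B : C.Obj} (f : FaaHom C A B) {n : ℕ}
    {x₁ x₂ : Fin (n + 1) → C.Hom Z A} (S : Finset (Fin n))
    (h0 : x₁ 0 = x₂ 0) (h : ∀ a ∈ S, x₁ a.succ = x₂ a.succ) :
    phiF f x₁ S = phiF f x₂ S := by
  rw [phiF_def, phiF_def]
  congr 2
  funext i
  cases i using Fin.cases with
  | zero => simpa using h0
  | succ j => simpa using h _ (enum_mem S j)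

/-- Any injective enumeration of `S` computes `phiF f x S`. -/
lemma phiF_eq_of_enum {A B : C.Obj} {f : FaaHom C A B} (hf : IsFaa C f) {Z : C.Obj}
    {n : ℕ} (x : Fin (n + 1) → C.Hom Z A) {m : ℕ} {S : Finset (Fin n)}
    (e : Fin m → Fin n) (he : Function.Injective e)
    (hS : ∀ a, (∃ i, e i = a) ↔ a ∈ S) :
    C.comp (f m) (C.toCDCData.tupleD m (Fin.cases (x 0) (fun j => x (e j).succ)))
      = phiF f x S := by
  rw [phiF_def]
  exact master hf (x 0) (fun a => x a.succ) e (enum S) he (enum_injective S)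
    (fun a => (hS a).trans ⟨fun h => exists_enum h, fun ⟨j, hj⟩ => hj ▸ enum_mem S j⟩)

/-- Any injective enumeration of the parts `G` computes `gev g f x G`. -/
lemma gev_eq_of_enum {A B Cb : C.Obj} {g : FaaHom C B Cb} (hg : IsFaa C g)
    (f : FaaHom C A B) {Z : C.Obj} {n : ℕ} (x : Fin (n + 1) → C.Hom Z A) {m : ℕ}
    {G : Finset (Finset (Fin n))} (e : Fin m → Finset (Fin n))
    (he : Function.Injective e) (hG : ∀ T, (∃ j, e j = T) ↔ T ∈ G) :
    C.comp (g m) (C.toCDCData.tupleD m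
        (Fin.cases (C.comp (f 0) (x 0)) (fun j => phiF f x (e j))))
      = gev g f x G := by
  unfold gev
  exact master hg (C.comp (f 0) (x 0)) (phiF f x) e G.toList.get he
    (toList_get_injective G)
    (fun T => (hG T).trans ⟨fun h => exists_toList_get h, fun ⟨j, hj⟩ => hj ▸ toList_get_mem G j⟩)

/-! #### Transport of partitions along the enumeration of a subset -/

def mapS {n : ℕ} (S : Finset (Fin n)) (T : Finset (Fin S.card)) : Finset (Fin n) :=
  T.image (enum S)

def preS {n : ℕ} (S : Finset (Fin n)) (T : Finset (Fin n)) : Finset (Fin S.card) :=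
  Finset.univ.filter (fun j => enum S j ∈ T)

lemma mapS_injective {n : ℕ} (S : Finset (Fin n)) : Function.Injective (mapS S) :=
  Finset.image_injective (enum_injective S)

lemma mapS_subset {n : ℕ} (S : Finset (Fin n)) (T : Finset (Fin S.card)) :
    mapS S T ⊆ S := by
  intro a ha
  obtain ⟨j, _, rfl⟩ := Finset.mem_image.mp ha
  exact enum_mem S j

lemma mem_mapS {n : ℕ} {S : Finset (Fin n)} {T : Finset (Fin S.card)} {j : Fin S.card} :
    enum S j ∈ mapS S T ↔ j ∈ T := by
  constructor
  · intro h
    obtain ⟨j', hj', he⟩ := Finset.mem_image.mp h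
    rwa [← enum_injective S he]
  · intro h; exact Finset.mem_image_of_mem _ h

lemma preS_mapS {n : ℕ} (S : Finset (Fin n)) (T : Finset (Fin S.card)) :
    preS S (mapS S T) = T := by
  ext j; simp [preS, mem_mapS]

lemma mapS_preS {n : ℕ} (S : Finset (Fin n)) {T : Finset (Fin n)} (hT : T ⊆ S) :
    mapS S (preS S T) = T := by
  ext a
  simp only [mapS, preS, Finset.mem_image, Finset.mem_filter, Finset.mem_univ, true_and]
  constructor
  · rintro ⟨j, hj, rfl⟩; exact hj
  · intro ha
    obtain ⟨j, rfl⟩ := exists_enum (hT ha)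
    exact ⟨j, ha, rfl⟩

def mapP {n : ℕ} (S : Finset (Fin n)) (P' : Finset (Finset (Fin S.card))) :
    Finset (Finset (Fin n)) := P'.image (mapS S)

lemma mapP_isPart {n : ℕ} {S : Finset (Fin n)} {P' : Finset (Finset (Fin S.card))}
    (hP' : IsPart Finset.univ P') : IsPart S (mapP S P') := by
  apply isPart_of
  · intro h
    obtain ⟨T, hT, hTe⟩ := Finset.mem_image.mp h
    rw [Finset.image_eq_empty.mp hTe] at hT
    exact hP'.1 hT
  · intro T hT
    obtain ⟨T', _, rfl⟩ := Finset.mem_image.mp hT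
    exact mapS_subset S T'
  · intro a ha
    obtain ⟨j, rfl⟩ := exists_enum ha
    obtain ⟨T, hT, hjT⟩ := hP'.exists_mem (Finset.mem_univ j)
    exact ⟨mapS S T, Finset.mem_image_of_mem _ hT, mem_mapS.mpr hjT⟩
  · intro a T₁ T₂ h₁ h₂ ha₁ ha₂
    obtain ⟨T₁', hT₁', rfl⟩ := Finset.mem_image.mp h₁
    obtain ⟨T₂', hT₂', rfl⟩ := Finset.mem_image.mp h₂
    obtain ⟨j, hj, rfl⟩ := Finset.mem_image.mp ha₁
    have hj₂ : j ∈ T₂' := mem_mapS.mp ha₂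
    rw [hP'.eq_of_mem hT₁' hT₂' hj hj₂]

lemma preP_isPart {n : ℕ} {S : Finset (Fin n)} {P : Finset (Finset (Fin n))}
    (hP : IsPart S P) : IsPart Finset.univ (P.image (preS S)) := by
  apply isPart_of
  · intro h
    obtain ⟨T, hT, hTe⟩ := Finset.mem_image.mp h
    have : T = ∅ := by
      rw [← mapS_preS S (hP.mem_subset hT), hTe]
      simp [mapS]
    exact hP.1 (this ▸ hT)
  · intro T _ j _; exact Finset.mem_univ j
  · intro j _
    obtain ⟨T, hT, haT⟩ := hP.exists_mem (enum_mem S j)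
    refine ⟨preS S T, Finset.mem_image_of_mem _ hT, ?_⟩
    simp [preS, haT]
  · intro j T₁ T₂ h₁ h₂ hj₁ hj₂
    obtain ⟨T₁', hT₁', rfl⟩ := Finset.mem_image.mp h₁
    obtain ⟨T₂', hT₂', rfl⟩ := Finset.mem_image.mp h₂
    have m₁ : enum S j ∈ T₁' := (Finset.mem_filter.mp hj₁).2
    have m₂ : enum S j ∈ T₂' := (Finset.mem_filter.mp hj₂).2
    rw [hP.eq_of_mem hT₁' hT₂' m₁ m₂]


/-! #### The localized Faà di Bruno formula -/

/-- Restriction of generalized elements along the enumeration of `S`. -/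
def extS {Z A : C.Obj} {n : ℕ} (x : Fin (n + 1) → C.Hom Z A) (S : Finset (Fin n)) :
    Fin (S.card + 1) → C.Hom Z A :=
  Fin.cases (x 0) (fun j => x (enum S j).succ)

lemma extS_zero {Z A : C.Obj} {n : ℕ} (x : Fin (n + 1) → C.Hom Z A) (S : Finset (Fin n)) :
    extS x S 0 = x 0 := rfl

lemma phiF_extS {A B : C.Obj} {f : FaaHom C A B} (hf : IsFaa C f) {Z : C.Obj}
    {n : ℕ} (x : Fin (n + 1) → C.Hom Z A) (S : Finset (Fin n))
    (T : Finset (Fin S.card)) :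
    phiF f (extS x S) T = phiF f x (mapS S T) := by
  rw [phiF_def]
  have h : (Fin.cases (extS x S 0) (fun j => extS x S (enum T j).succ) :
      Fin (T.card + 1) → C.Hom Z A)
      = Fin.cases (x 0) (fun j => x (enum S (enum T j)).succ) := by
    funext i
    cases i using Fin.cases with
    | zero => rfl
    | succ j => simp [extS]
  rw [h]
  exact phiF_eq_of_enum hf x (fun j => enum S (enum T j))
    ((enum_injective S).comp (enum_injective T))
    (by
      intro a
      constructor
      · rintro ⟨i, rfl⟩
        exact Finset.mem_image_of_mem _ (enum_mem T i)
      · intro ha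
        obtain ⟨j, hj, rfl⟩ := Finset.mem_image.mp ha
        obtain ⟨i, rfl⟩ := exists_enum hj
        exact ⟨i, rfl⟩)

lemma gev_extS {A B Cb : C.Obj} {g : FaaHom C B Cb} {f : FaaHom C A B}
    (hg : IsFaa C g) (hf : IsFaa C f) {Z : C.Obj} {n : ℕ}
    (x : Fin (n + 1) → C.Hom Z A) (S : Finset (Fin n))
    (P' : Finset (Finset (Fin S.card))) :
    gev g f (extS x S) P' = gev g f x (mapP S P') := by
  unfold gev
  have h : (Fin.cases (C.comp (f 0) (extS x S 0))
      (fun j => phiF f (extS x S) (P'.toList.get j)) :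
        Fin (P'.toList.length + 1) → C.Hom Z B)
      = Fin.cases (C.comp (f 0) (x 0)) (fun j => phiF f x (mapS S (P'.toList.get j))) := by
    funext i
    cases i using Fin.cases with
    | zero => rfl
    | succ j =>
        simp only [Fin.cases_succ]
        exact phiF_extS hf x S _
  erw [h]
  exact gev_eq_of_enum hg f x (fun j => mapS S (P'.toList.get j))
    ((mapS_injective S).comp (toList_get_injective P'))
    (by
      intro T
      constructor
      · rintro ⟨j, rfl⟩
        exact Finset.mem_image_of_mem _ (toList_get_mem P' j)
      · intro hT
        obtain ⟨T', hT', rfl⟩ := Finset.mem_image.mp hT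
        obtain ⟨j, rfl⟩ := exists_toList_get hT'
        exact ⟨j, rfl⟩)

/-- The localized Faà di Bruno formula: `(g ∘ f)^{(S)}` evaluated on generalized
elements is a sum over partitions of `S`. -/
lemma local_eval {A B Cb : C.Obj} {g : FaaHom C B Cb} {f : FaaHom C A B}
    (hg : IsFaa C g) (hf : IsFaa C f) {Z : C.Obj} {n : ℕ}
    (x : Fin (n + 1) → C.Hom Z A) (S : Finset (Fin n)) :
    C.comp (fIdxF C (faaComp C g f) n S) (C.toCDCData.tupleD n x)
      = ∑ P ∈ partitionsOn S, gev g f x P := by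
  rw [fIdxF_comp, phiF_def]
  have h : (Fin.cases (x 0) (fun j => x (enum S j).succ) : Fin (S.card + 1) → C.Hom Z A)
      = extS x S := rfl
  rw [h, top_eval g f (extS x S)]
  refine Finset.sum_nbij' (mapP S) (fun P => P.image (preS S)) ?_ ?_ ?_ ?_ ?_
  · intro P' hP'
    exact mem_partitionsOn.mpr (mapP_isPart (mem_partitions.mp hP'))
  · intro P hP
    exact mem_partitions.mpr (preP_isPart (mem_partitionsOn.mp hP))
  · intro P' _
    show (mapP S P').image (preS S) = P'
    unfold mapP
    rw [Finset.image_image]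
    have : ∀ T ∈ P', (preS S ∘ mapS S) T = id T := by
      intro T _; simp [preS_mapS]
    rw [Finset.image_congr (by intro T hT; exact this T hT), Finset.image_id]
  · intro P hP
    unfold mapP
    rw [Finset.image_image]
    have hP' := mem_partitionsOn.mp hP
    have : ∀ T ∈ P, (mapS S ∘ preS S) T = id T := by
      intro T hT; simp [mapS_preS S (hP'.mem_subset hT)]
    rw [Finset.image_congr (by intro T hT; exact this T hT), Finset.image_id]
  · intro P' _
    exact gev_extS hg hf x S P'


/-! #### The identity family -/

lemma idF_eq_zero {A : C.Obj} {m : ℕ} (h : 2 ≤ m) : idF C A m = 0 := by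
  match m, h with
  | (l + 2), _ => rfl

lemma isFaa_idF (A : C.Obj) : IsFaa C (idF C A) := by
  refine ⟨?_, ?_, ?_⟩
  · intro n Z x σ
    match n with
    | 0 => simp [CDCData.tupleD]
    | 1 =>
        show C.comp C.snd _ = C.comp C.snd _
        simp only [CDCData.tupleD]
        erw [C.snd_pair, C.snd_pair]
        have h1 : (Fin.last 1) = (0 : Fin 1).succ := rfl
        rw [h1, Fin.cases_succ, Fin.eq_zero (σ 0)]
    | (l + 2) =>
        show C.comp (0 : C.Hom _ _) _ = C.comp (0 : C.Hom _ _) _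
        rw [C.zero_comp, C.zero_comp]
  · intro n Z x i u v
    match n with
    | 0 => exact i.elim0
    | 1 =>
        show C.comp C.snd _ = C.comp C.snd _ + C.comp C.snd _
        simp only [CDCData.tupleD]
        erw [C.snd_pair, C.snd_pair, C.snd_pair]
        have h0 : i = 0 := Fin.eq_zero i
        subst h0
        have h1 : (Fin.last 1) = (0 : Fin 1).succ := rfl
        rw [h1]
        simp
    | (l + 2) =>
        show C.comp (0 : C.Hom _ _) _ = C.comp (0 : C.Hom _ _) _ + C.comp (0 : C.Hom _ _) _
        rw [C.zero_comp, C.zero_comp, C.zero_comp, add_zero]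
  · intro n Z x i r u
    match n with
    | 0 => exact i.elim0
    | 1 =>
        show C.comp C.snd _ = r • C.comp C.snd _
        simp only [CDCData.tupleD]
        erw [C.snd_pair, C.snd_pair]
        have h0 : i = 0 := Fin.eq_zero i
        subst h0
        have h1 : (Fin.last 1) = (0 : Fin 1).succ := rfl
        rw [h1]
        simp
    | (l + 2) =>
        show C.comp (0 : C.Hom _ _) _ = r • C.comp (0 : C.Hom _ _) _
        rw [C.zero_comp, C.zero_comp, smul_zero]


/-! #### Small computations -/

lemma partitions_zero : partitions 0 = {∅} := by decide

lemma gev_empty {A B Cb : C.Obj} {g : FaaHom C B Cb} (hg : IsFaa C g) (f : FaaHom C A B)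
    {Z : C.Obj} {n : ℕ} (x : Fin (n + 1) → C.Hom Z A) :
    gev g f x (∅ : Finset (Finset (Fin n))) = C.comp (g 0) (C.comp (f 0) (x 0)) := by
  rw [← gev_eq_of_enum hg f x (fun j : Fin 0 => j.elim0) (fun j => j.elim0)
    (by
      intro T
      constructor
      · rintro ⟨j, _⟩; exact j.elim0
      · intro h; simp at h)]
  rfl

lemma fin1_injective {α : Type*} (v : Fin 1 → α) : Function.Injective v := by
  intro a b _
  rw [Fin.eq_zero a, Fin.eq_zero b]

lemma gev_singleton {A B Cb : C.Obj} {g : FaaHom C B Cb} (hg : IsFaa C g) (f : FaaHom C A B)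
    {Z : C.Obj} {n : ℕ} (x : Fin (n + 1) → C.Hom Z A) (T : Finset (Fin n)) :
    gev g f x {T} = C.comp (g 1) (C.toCDCData.tupleD 1
      (Fin.cases (C.comp (f 0) (x 0)) (fun _ => phiF f x T))) := by
  exact (gev_eq_of_enum hg f x (fun _ : Fin 1 => T) (fin1_injective _)
    (by intro T'; simp [eq_comm])).symm

lemma phiF_singleton {A B : C.Obj} {f : FaaHom C A B} (hf : IsFaa C f) {Z : C.Obj}
    {n : ℕ} (x : Fin (n + 1) → C.Hom Z A) (a : Fin n) :
    phiF f x {a} = C.comp (f 1) (C.toCDCData.tupleD 1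
      (Fin.cases (x 0) (fun _ => x a.succ))) := by
  exact (phiF_eq_of_enum hf x (fun _ : Fin 1 => a) (fin1_injective _)
    (by intro a'; simp [eq_comm])).symm

lemma phiF_univ {A B : C.Obj} {f : FaaHom C A B} (hf : IsFaa C f) {Z : C.Obj}
    {n : ℕ} (x : Fin (n + 1) → C.Hom Z A) :
    phiF f x Finset.univ = C.comp (f n) (C.toCDCData.tupleD n x) := by
  have h2 := phiF_eq_of_enum (S := Finset.univ) hf x (fun j : Fin n => j)
    (fun a b h => h) (by simp)
  rw [← h2]
  congr 2
  funext i
  cases i using Fin.cases with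
  | zero => simp
  | succ j => simp

lemma snd_tupleD {Z A : C.Obj} (y : Fin 2 → C.Hom Z A) :
    C.comp C.snd (C.toCDCData.tupleD 1 y) = y 1 := by
  simp only [CDCData.tupleD]
  erw [C.snd_pair]
  congr 1

lemma isPart_univ_card {m : ℕ} {P : Finset (Finset (Fin (m + 1)))}
    (hP : IsPart Finset.univ P) (hne : P ≠ {Finset.univ}) : 2 ≤ P.card := by
  by_contra h
  have h01 : P.card = 0 ∨ P.card = 1 := by omega
  rcases h01 with h0 | h1
  · obtain ⟨T, hT, _⟩ := hP.exists_mem (Finset.mem_univ (0 : Fin (m + 1)))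
    rw [Finset.card_eq_zero.mp h0] at hT
    simp at hT
  · obtain ⟨T, rfl⟩ := Finset.card_eq_one.mp h1
    apply hne
    congr 1
    apply Finset.eq_univ_iff_forall.mpr
    intro a
    obtain ⟨T', hT', haT'⟩ := hP.exists_mem (Finset.mem_univ a)
    rwa [Finset.mem_singleton.mp hT'] at haT'

lemma singleton_univ_mem_partitions {m : ℕ} :
    ({Finset.univ} : Finset (Finset (Fin (m + 1)))) ∈ partitions (m + 1) := by
  apply mem_partitions.mpr
  apply isPart_of
  · intro h
    exact Finset.univ_nonempty.ne_empty (Finset.mem_singleton.mp h).symm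
  · intro T _; exact Finset.subset_univ T
  · intro a _
    exact ⟨Finset.univ, Finset.mem_singleton_self _, Finset.mem_univ a⟩
  · intro a T₁ T₂ h₁ h₂ _ _
    rw [Finset.mem_singleton.mp h₁, Finset.mem_singleton.mp h₂]

/-! #### Left unit law -/

lemma faaComp_idF_left_eval {A B : C.Obj} {f : FaaHom C A B} (hf : IsFaa C f)
    {Z : C.Obj} {n : ℕ} (x : Fin (n + 1) → C.Hom Z A) :
    C.comp ((faaComp C (idF C B) f) n) (C.toCDCData.tupleD n x)
      = C.comp (f n) (C.toCDCData.tupleD n x) := by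
  rw [top_eval]
  match n with
  | 0 =>
      rw [partitions_zero, Finset.sum_singleton, gev_empty (isFaa_idF B) f x]
      show C.comp (C.id B) _ = _
      erw [C.id_comp]
      rfl
  | (m + 1) =>
      rw [Finset.sum_eq_single_of_mem {Finset.univ} singleton_univ_mem_partitions ?vanish]
      case vanish =>
        intro P hP hne
        unfold gev
        rw [idF_eq_zero (by
          rw [Finset.length_toList]
          exact isPart_univ_card (mem_partitions.mp hP) hne), C.zero_comp]
      rw [gev_singleton (isFaa_idF B) f x Finset.univ]
      show C.comp C.snd _ = _
      rw [snd_tupleD]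
      have h1 : (1 : Fin 2) = (0 : Fin 1).succ := rfl
      rw [h1, Fin.cases_succ]
      exact phiF_univ hf x

lemma left_unit {A B : C.Obj} {f : FaaHom C A B} (hf : IsFaa C f) :
    faaComp C (idF C B) f = f :=
  funext fun n => hom_ext (faaComp_idF_left_eval hf _)


/-! #### Right unit law -/

lemma phiF_idF_singleton {A : C.Obj} {Z : C.Obj} {n : ℕ}
    (x : Fin (n + 1) → C.Hom Z A) (a : Fin n) :
    phiF (idF C A) x {a} = x a.succ := by
  rw [phiF_singleton (isFaa_idF A) x a]
  show C.comp C.snd _ = _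
  rw [snd_tupleD]
  have h1 : (1 : Fin 2) = (0 : Fin 1).succ := rfl
  rw [h1, Fin.cases_succ]

lemma phiF_idF_zero {A : C.Obj} {Z : C.Obj} {n : ℕ}
    (x : Fin (n + 1) → C.Hom Z A) {T : Finset (Fin n)} (hT : 2 ≤ T.card) :
    phiF (idF C A) x T = 0 := by
  rw [phiF_def, idF_eq_zero hT, C.zero_comp]

/-- The partition of `Fin n` into singletons. -/
def singletons (n : ℕ) : Finset (Finset (Fin n)) :=
  Finset.univ.image (fun a : Fin n => ({a} : Finset (Fin n)))

lemma singletons_mem_partitions {n : ℕ} : singletons n ∈ partitions n := by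
  apply mem_partitions.mpr
  apply isPart_of
  · intro h
    obtain ⟨a, _, ha⟩ := Finset.mem_image.mp h
    exact Finset.singleton_ne_empty a ha
  · intro T _; exact Finset.subset_univ T
  · intro a _
    exact ⟨{a}, Finset.mem_image_of_mem _ (Finset.mem_univ a), Finset.mem_singleton_self a⟩
  · intro a T₁ T₂ h₁ h₂ ha₁ ha₂
    obtain ⟨b₁, _, rfl⟩ := Finset.mem_image.mp h₁
    obtain ⟨b₂, _, rfl⟩ := Finset.mem_image.mp h₂
    obtain rfl := Finset.mem_singleton.mp ha₁
    obtain rfl := Finset.mem_singleton.mp ha₂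
    rfl

lemma eq_singletons {n : ℕ} {P : Finset (Finset (Fin n))} (hP : IsPart Finset.univ P)
    (hall : ∀ T ∈ P, T.card < 2) : P = singletons n := by
  ext T
  constructor
  · intro hT
    have h1 : T.card = 1 := by
      have := (hP.nonempty_mem hT).card_pos
      have := hall T hT
      omega
    obtain ⟨a, rfl⟩ := Finset.card_eq_one.mp h1
    exact Finset.mem_image_of_mem _ (Finset.mem_univ a)
  · intro hT
    obtain ⟨a, _, rfl⟩ := Finset.mem_image.mp hT
    obtain ⟨T', hT', haT'⟩ := hP.exists_mem (Finset.mem_univ a)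
    have h1 : T'.card = 1 := by
      have := (hP.nonempty_mem hT').card_pos
      have := hall T' hT'
      omega
    obtain ⟨b, rfl⟩ := Finset.card_eq_one.mp h1
    obtain rfl := Finset.mem_singleton.mp haT'
    exact hT'

lemma faaComp_idF_right_eval {A B : C.Obj} {f : FaaHom C A B} (hf : IsFaa C f)
    {Z : C.Obj} {n : ℕ} (x : Fin (n + 1) → C.Hom Z A) :
    C.comp ((faaComp C f (idF C A)) n) (C.toCDCData.tupleD n x)
      = C.comp (f n) (C.toCDCData.tupleD n x) := by
  rw [top_eval]
  rw [Finset.sum_eq_single_of_mem (singletons n) singletons_mem_partitions ?vanish]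
  case vanish =>
    intro P hP hne
    by_cases hex2 : ∃ T ∈ P, 2 ≤ T.card
    · obtain ⟨T₀, hT₀, hT₀2⟩ := hex2
      obtain ⟨j₁, hj₁⟩ := exists_toList_get hT₀
      unfold gev
      exact (mel hf _ _).map_coord_zero j₁ (by rw [hj₁]; exact phiF_idF_zero x hT₀2)
    · push_neg at hex2
      exact absurd (eq_singletons (mem_partitions.mp hP) hex2) hne
  · have h := gev_eq_of_enum hf (idF C A) x
      (fun a : Fin n => ({a} : Finset (Fin n))) Finset.singleton_injective
      (by
        intro T
        constructor
        · rintro ⟨a, rfl⟩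
          exact Finset.mem_image_of_mem _ (Finset.mem_univ a)
        · intro hT
          obtain ⟨a, _, rfl⟩ := Finset.mem_image.mp hT
          exact ⟨a, rfl⟩)
    refine Eq.trans h.symm ?_
    congr 2
    funext i
    cases i using Fin.cases with
    | zero =>
        simp only [Fin.cases_zero]
        exact C.id_comp (x 0)
    | succ j =>
        simp only [Fin.cases_succ]
        exact phiF_idF_singleton x j

lemma right_unit {A B : C.Obj} {f : FaaHom C A B} (hf : IsFaa C f) :
    faaComp C f (idF C A) = f :=
  funext fun n => hom_ext (faaComp_idF_right_eval hf _)


/-! #### Closure of `IsFaa` under composition -/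

lemma image_perm_isPart {n : ℕ} {P : Finset (Finset (Fin n))} (σ : Equiv.Perm (Fin n))
    (hP : IsPart Finset.univ P) :
    IsPart Finset.univ (P.image (fun T => T.image σ)) := by
  apply isPart_of
  · intro h
    obtain ⟨T, hT, hTe⟩ := Finset.mem_image.mp h
    rw [Finset.image_eq_empty.mp hTe] at hT
    exact hP.1 hT
  · intro T _; exact Finset.subset_univ T
  · intro a _
    obtain ⟨T, hT, haT⟩ := hP.exists_mem (Finset.mem_univ (σ.symm a))
    refine ⟨T.image σ, Finset.mem_image_of_mem _ hT, ?_⟩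
    have := Finset.mem_image_of_mem σ haT
    simpa using this
  · intro a T₁ T₂ h₁ h₂ ha₁ ha₂
    obtain ⟨T₁', hT₁', rfl⟩ := Finset.mem_image.mp h₁
    obtain ⟨T₂', hT₂', rfl⟩ := Finset.mem_image.mp h₂
    obtain ⟨b₁, hb₁, rfl⟩ := Finset.mem_image.mp ha₁
    obtain ⟨b₂, hb₂, hb⟩ := Finset.mem_image.mp ha₂
    obtain rfl := σ.injective hb
    rw [hP.eq_of_mem hT₁' hT₂' hb₁ hb₂]

lemma phiF_perm {A B : C.Obj} {f : FaaHom C A B} (hf : IsFaa C f) {Z : C.Obj} {n : ℕ}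
    {x x' : Fin (n + 1) → C.Hom Z A} (σ : Equiv.Perm (Fin n))
    (h0 : x' 0 = x 0) (hs : ∀ j, x' j.succ = x (σ j).succ) (T : Finset (Fin n)) :
    phiF f x' T = phiF f x (T.image σ) := by
  rw [phiF_def]
  have h : (Fin.cases (x' 0) (fun j => x' (enum T j).succ) : Fin (T.card + 1) → C.Hom Z A)
      = Fin.cases (x 0) (fun j => x (σ (enum T j)).succ) := by
    funext i
    cases i using Fin.cases with
    | zero => simpa using h0
    | succ j => simp [hs]
  rw [h]
  refine phiF_eq_of_enum hf x (fun j => σ (enum T j))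
    (σ.injective.comp (enum_injective T)) ?_
  intro a
  constructor
  · rintro ⟨i, rfl⟩
    exact Finset.mem_image_of_mem _ (enum_mem T i)
  · intro ha
    obtain ⟨b, hb, rfl⟩ := Finset.mem_image.mp ha
    obtain ⟨i, rfl⟩ := exists_enum hb
    exact ⟨i, rfl⟩

lemma gev_perm {A B Cb : C.Obj} {g : FaaHom C B Cb} {f : FaaHom C A B}
    (hg : IsFaa C g) (hf : IsFaa C f) {Z : C.Obj} {n : ℕ}
    {x x' : Fin (n + 1) → C.Hom Z A} (σ : Equiv.Perm (Fin n))
    (h0 : x' 0 = x 0) (hs : ∀ j, x' j.succ = x (σ j).succ) (P : Finset (Finset (Fin n))) :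
    gev g f x' P = gev g f x (P.image (fun T => T.image σ)) := by
  unfold gev
  have h : (Fin.cases (C.comp (f 0) (x' 0)) (fun j => phiF f x' (P.toList.get j)) :
      Fin (P.toList.length + 1) → C.Hom Z B)
      = Fin.cases (C.comp (f 0) (x 0)) (fun j => phiF f x ((P.toList.get j).image σ)) := by
    funext i
    cases i using Fin.cases with
    | zero => simp [h0]
    | succ j =>
        simp only [Fin.cases_succ]
        exact phiF_perm hf σ h0 hs _
  rw [h]
  refine gev_eq_of_enum hg f x (fun j => (P.toList.get j).image σ)
    ((Finset.image_injective σ.injective).comp (toList_get_injective P)) ?_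
  intro T
  constructor
  · rintro ⟨j, rfl⟩
    exact Finset.mem_image_of_mem _ (toList_get_mem P j)
  · intro hT
    obtain ⟨T', hT', rfl⟩ := Finset.mem_image.mp hT
    obtain ⟨j, rfl⟩ := exists_toList_get hT'
    exact ⟨j, rfl⟩

lemma phiF_update_notMem {A B : C.Obj} (f : FaaHom C A B) {Z : C.Obj} {n : ℕ}
    (x : Fin (n + 1) → C.Hom Z A) (i : Fin n) (w : C.Hom Z A) (T : Finset (Fin n))
    (hi : i ∉ T) :
    phiF f (Function.update x i.succ w) T = phiF f x T := by
  apply phiF_congr f T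
  · exact Function.update_of_ne (Fin.succ_ne_zero i).symm _ _
  · intro a ha
    have hne : a ≠ i := fun h => hi (h ▸ ha)
    exact Function.update_of_ne (fun h => hne (Fin.succ_injective n h)) _ _

lemma phiF_update_key {A B : C.Obj} (f : FaaHom C A B) {Z : C.Obj} {n : ℕ}
    (x : Fin (n + 1) → C.Hom Z A) {i : Fin n} {T : Finset (Fin n)}
    {j₀ : Fin T.card} (hj₀ : enum T j₀ = i) (w : C.Hom Z A) :
    (Fin.cases (Function.update x i.succ w 0)
        (fun j => Function.update x i.succ w (enum T j).succ) :
        Fin (T.card + 1) → C.Hom Z A)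
      = Fin.cases (x 0) (Function.update (fun j => x (enum T j).succ) j₀ w) := by
  funext j
  cases j using Fin.cases with
  | zero =>
      simp only [Fin.cases_zero]
      exact Function.update_of_ne (Fin.succ_ne_zero i).symm _ _
  | succ j =>
      simp only [Fin.cases_succ]
      by_cases h : j = j₀
      · subst h
        rw [hj₀]
        simp
      · have hne : enum T j ≠ i := fun hh => h (enum_injective T (by rw [hj₀, hh]))
        rw [Function.update_of_ne (fun hh => hne (Fin.succ_injective n hh)) _ _,
          Function.update_of_ne h]

lemma phiF_update_mem_add {A B : C.Obj} {f : FaaHom C A B} (hf : IsFaa C f) {Z : C.Obj}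
    {n : ℕ} (x : Fin (n + 1) → C.Hom Z A) (i : Fin n) (u v : C.Hom Z A)
    (T : Finset (Fin n)) (hi : i ∈ T) :
    phiF f (Function.update x i.succ (u + v)) T
      = phiF f (Function.update x i.succ u) T + phiF f (Function.update x i.succ v) T := by
  obtain ⟨j₀, hj₀⟩ := exists_enum hi
  rw [phiF_def, phiF_def, phiF_def, phiF_update_key f x hj₀, phiF_update_key f x hj₀,
    phiF_update_key f x hj₀]
  exact (mel hf T.card (x 0)).map_update_add (fun j => x (enum T j).succ) j₀ u v

lemma phiF_update_mem_smul {A B : C.Obj} {f : FaaHom C A B} (hf : IsFaa C f) {Z : C.Obj}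
    {n : ℕ} (x : Fin (n + 1) → C.Hom Z A) (i : Fin n) (r : k) (u : C.Hom Z A)
    (T : Finset (Fin n)) (hi : i ∈ T) :
    phiF f (Function.update x i.succ (r • u)) T
      = r • phiF f (Function.update x i.succ u) T := by
  obtain ⟨j₀, hj₀⟩ := exists_enum hi
  rw [phiF_def, phiF_def, phiF_update_key f x hj₀, phiF_update_key f x hj₀]
  exact (mel hf T.card (x 0)).map_update_smul (fun j => x (enum T j).succ) j₀ r u

lemma isFaa_comp {A B Cb : C.Obj} {g : FaaHom C B Cb} {f : FaaHom C A B}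
    (hg : IsFaa C g) (hf : IsFaa C f) : IsFaa C (faaComp C g f) := by
  refine ⟨?_, ?_, ?_⟩
  · -- symmetry
    intro n Z x σ
    rw [top_eval, top_eval]
    refine Finset.sum_nbij' (fun P => P.image (fun T => T.image σ))
      (fun P => P.image (fun T => T.image σ.symm)) ?_ ?_ ?_ ?_ ?_
    · intro P hP
      exact mem_partitions.mpr (image_perm_isPart σ (mem_partitions.mp hP))
    · intro P hP
      exact mem_partitions.mpr (image_perm_isPart σ.symm (mem_partitions.mp hP))
    · intro P _
      show ((P.image (fun T => T.image σ)).image (fun T => T.image σ.symm)) = P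
      rw [Finset.image_image]
      have : ∀ T ∈ P, ((fun T => T.image σ.symm) ∘ (fun T => T.image σ)) T = id T := by
        intro T _
        simp [Finset.image_image]
      rw [Finset.image_congr (by intro T hT; exact this T hT), Finset.image_id]
    · intro P _
      show ((P.image (fun T => T.image σ.symm)).image (fun T => T.image σ)) = P
      rw [Finset.image_image]
      have : ∀ T ∈ P, ((fun T => T.image σ) ∘ (fun T => T.image σ.symm)) T = id T := by
        intro T _
        simp [Finset.image_image]
      rw [Finset.image_congr (by intro T hT; exact this T hT), Finset.image_id]
    · intro P _
      exact gev_perm hg hf σ (by simp) (by intro j; simp) P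
  · -- additivity
    intro n Z x i u v
    rw [top_eval, top_eval, top_eval, ← Finset.sum_add_distrib]
    refine Finset.sum_congr rfl fun P hP => ?_
    have hPi := mem_partitions.mp hP
    obtain ⟨T₀, hT₀, hiT₀⟩ := hPi.exists_mem (Finset.mem_univ i)
    obtain ⟨j₁, hj₁⟩ := exists_toList_get hT₀
    have hkey : ∀ w : C.Hom Z A,
        (fun j => phiF f (Function.update x i.succ w) (P.toList.get j))
          = Function.update (fun j => phiF f x (P.toList.get j)) j₁
              (phiF f (Function.update x i.succ w) T₀) := by
      intro w
      funext j
      by_cases h : j = j₁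
      · subst h
        rw [hj₁]
        simp
      · have hne : P.toList.get j ≠ T₀ := fun hh => h (toList_get_injective P (hh.trans hj₁.symm))
        have hnotin : i ∉ P.toList.get j :=
          fun hin => hne (hPi.eq_of_mem (toList_get_mem P j) hT₀ hin hiT₀)
        rw [Function.update_of_ne h]
        exact phiF_update_notMem f x i w _ hnotin
    have hhead : ∀ w : C.Hom Z A,
        C.comp (f 0) (Function.update x i.succ w 0) = C.comp (f 0) (x 0) := by
      intro w
      rw [Function.update_of_ne (Fin.succ_ne_zero i).symm]
    unfold gev
    rw [hkey, hkey, hkey, hhead, hhead, hhead, phiF_update_mem_add hf x i u v T₀ hiT₀]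
    exact (mel hg P.toList.length _).map_update_add (fun j => phiF f x (P.toList.get j)) j₁ _ _
  · -- scalar multiplication
    intro n Z x i r u
    rw [top_eval, top_eval, Finset.smul_sum]
    refine Finset.sum_congr rfl fun P hP => ?_
    have hPi := mem_partitions.mp hP
    obtain ⟨T₀, hT₀, hiT₀⟩ := hPi.exists_mem (Finset.mem_univ i)
    obtain ⟨j₁, hj₁⟩ := exists_toList_get hT₀
    have hkey : ∀ w : C.Hom Z A,
        (fun j => phiF f (Function.update x i.succ w) (P.toList.get j))
          = Function.update (fun j => phiF f x (P.toList.get j)) j₁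
              (phiF f (Function.update x i.succ w) T₀) := by
      intro w
      funext j
      by_cases h : j = j₁
      · subst h
        rw [hj₁]
        simp
      · have hne : P.toList.get j ≠ T₀ := fun hh => h (toList_get_injective P (hh.trans hj₁.symm))
        have hnotin : i ∉ P.toList.get j :=
          fun hin => hne (hPi.eq_of_mem (toList_get_mem P j) hT₀ hin hiT₀)
        rw [Function.update_of_ne h]
        exact phiF_update_notMem f x i w _ hnotin
    have hhead : ∀ w : C.Hom Z A,
        C.comp (f 0) (Function.update x i.succ w 0) = C.comp (f 0) (x 0) := by
      intro w
      rw [Function.update_of_ne (Fin.succ_ne_zero i).symm]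
    unfold gev
    rw [hkey, hkey, hhead, hhead, phiF_update_mem_smul hf x i r u T₀ hiT₀]
    exact (mel hg P.toList.length _).map_update_smul (fun j => phiF f x (P.toList.get j)) j₁ r _


/-! #### Grouping and ungrouping of partitions (combinatorics for associativity) -/

/-- The union of the parts of `P` indexed by `T`. -/
noncomputable def UB {n : ℕ} (P : Finset (Finset (Fin n))) (T : Finset (Fin P.toList.length)) :
    Finset (Fin n) :=
  T.biUnion (fun t => P.toList.get t)

section Grouping

variable {n : ℕ} {P : Finset (Finset (Fin n))}

lemma mem_UB {T : Finset (Fin P.toList.length)} {a : Fin n} :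
    a ∈ UB P T ↔ ∃ t ∈ T, a ∈ P.toList.get t := Finset.mem_biUnion

lemma parts_subset_UB {T : Finset (Fin P.toList.length)} {t : Fin P.toList.length}
    (ht : t ∈ T) : P.toList.get t ⊆ UB P T :=
  fun _ ha => mem_UB.mpr ⟨t, ht, ha⟩

lemma get_unique (hP : IsPart Finset.univ P) {a : Fin n} {t₁ t₂ : Fin P.toList.length}
    (h₁ : a ∈ P.toList.get t₁) (h₂ : a ∈ P.toList.get t₂) : t₁ = t₂ :=
  toList_get_injective P
    (hP.eq_of_mem (toList_get_mem P t₁) (toList_get_mem P t₂) h₁ h₂)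

lemma mem_UB_iff (hP : IsPart Finset.univ P) {a : Fin n} {t : Fin P.toList.length}
    (hat : a ∈ P.toList.get t) {T : Finset (Fin P.toList.length)} :
    a ∈ UB P T ↔ t ∈ T := by
  constructor
  · intro h
    obtain ⟨t', ht', hat'⟩ := mem_UB.mp h
    rwa [get_unique hP hat hat']
  · intro h
    exact parts_subset_UB h hat

lemma UB_injective (hP : IsPart Finset.univ P) : Function.Injective (UB P) := by
  have key : ∀ T₁ T₂ : Finset (Fin P.toList.length), UB P T₁ = UB P T₂ →
      ∀ t, t ∈ T₁ → t ∈ T₂ := by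
    intro T₁ T₂ h t ht
    obtain ⟨a, ha⟩ := hP.nonempty_mem (toList_get_mem P t)
    have h1 : a ∈ UB P T₁ := (mem_UB_iff hP ha).mpr ht
    rw [h] at h1
    exact (mem_UB_iff hP ha).mp h1
  intro T₁ T₂ h
  ext t
  exact ⟨key T₁ T₂ h t, key T₂ T₁ h.symm t⟩

lemma UB_nonempty (hP : IsPart Finset.univ P) {T : Finset (Fin P.toList.length)}
    (hT : T.Nonempty) : (UB P T).Nonempty := by
  obtain ⟨t, ht⟩ := hT
  obtain ⟨a, ha⟩ := hP.nonempty_mem (toList_get_mem P t)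
  exact ⟨a, parts_subset_UB ht ha⟩

lemma key_filter (hP : IsPart Finset.univ P) (T : Finset (Fin P.toList.length)) :
    P.filter (fun T' => T' ⊆ UB P T) = T.image (P.toList.get) := by
  ext T'
  rw [Finset.mem_filter, Finset.mem_image]
  constructor
  · rintro ⟨hT'P, hsub⟩
    obtain ⟨t, ht⟩ := exists_toList_get hT'P
    obtain ⟨a, ha⟩ := hP.nonempty_mem hT'P
    have hat : a ∈ P.toList.get t := ht.symm ▸ ha
    have : t ∈ T := (mem_UB_iff hP hat).mp (hsub ha)
    exact ⟨t, this, ht⟩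
  · rintro ⟨t, htT, rfl⟩
    exact ⟨toList_get_mem P t, parts_subset_UB htT⟩

lemma isPart_image_parts (hP : IsPart Finset.univ P) (T : Finset (Fin P.toList.length)) :
    IsPart (UB P T) (T.image P.toList.get) := by
  apply isPart_of
  · intro h
    obtain ⟨t, _, hte⟩ := Finset.mem_image.mp h
    exact Finset.Nonempty.ne_empty (hP.nonempty_mem (toList_get_mem P t)) hte
  · intro T' hT'
    obtain ⟨t, htT, rfl⟩ := Finset.mem_image.mp hT'
    exact parts_subset_UB htT
  · intro a ha
    obtain ⟨t, htT, hat⟩ := mem_UB.mp ha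
    exact ⟨P.toList.get t, Finset.mem_image_of_mem _ htT, hat⟩
  · intro a T₁ T₂ h₁ h₂ ha₁ ha₂
    obtain ⟨t₁, _, rfl⟩ := Finset.mem_image.mp h₁
    obtain ⟨t₂, _, rfl⟩ := Finset.mem_image.mp h₂
    rw [get_unique hP ha₁ ha₂]

lemma isPart_image_UB (hP : IsPart Finset.univ P)
    {Q : Finset (Finset (Fin P.toList.length))} (hQ : IsPart Finset.univ Q) :
    IsPart Finset.univ (Q.image (UB P)) := by
  apply isPart_of
  · intro h
    obtain ⟨T, hT, hTe⟩ := Finset.mem_image.mp h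
    exact Finset.Nonempty.ne_empty (UB_nonempty hP (hQ.nonempty_mem hT)) hTe
  · intro T _; exact Finset.subset_univ T
  · intro a _
    obtain ⟨T', hT'P, haT'⟩ := hP.exists_mem (Finset.mem_univ a)
    obtain ⟨t, rfl⟩ := exists_toList_get hT'P
    obtain ⟨T, hTQ, htT⟩ := hQ.exists_mem (Finset.mem_univ t)
    exact ⟨UB P T, Finset.mem_image_of_mem _ hTQ, parts_subset_UB htT haT'⟩
  · intro a T₁ T₂ h₁ h₂ ha₁ ha₂
    obtain ⟨T₁', hT₁', rfl⟩ := Finset.mem_image.mp h₁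
    obtain ⟨T₂', hT₂', rfl⟩ := Finset.mem_image.mp h₂
    obtain ⟨t₁, ht₁, hat₁⟩ := mem_UB.mp ha₁
    have ht₂ : t₁ ∈ T₂' := (mem_UB_iff hP hat₁).mp ha₂
    rw [hQ.eq_of_mem hT₁' hT₂' ht₁ ht₂]

lemma univ_image_get {α : Type*} [DecidableEq α] (R : Finset α) :
    Finset.univ.image (R.toList.get) = R := by
  ext a
  rw [Finset.mem_image]
  constructor
  · rintro ⟨j, _, rfl⟩
    exact toList_get_mem R j
  · intro ha
    obtain ⟨j, hj⟩ := exists_toList_get ha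
    exact ⟨j, Finset.mem_univ j, hj⟩

end Grouping

section Ungrouping

variable {n : ℕ} {R : Finset (Finset (Fin n))}
  {c : Fin R.toList.length → Finset (Finset (Fin n))}

lemma unique_j (hR : IsPart Finset.univ R)
    (hc : ∀ j, IsPart (R.toList.get j) (c j)) {T : Finset (Fin n)}
    {j₁ j₂ : Fin R.toList.length} (h₁ : T ∈ c j₁) (h₂ : T ∈ c j₂) : j₁ = j₂ := by
  obtain ⟨a, ha⟩ := (hc j₁).nonempty_mem h₁
  apply toList_get_injective R
  exact hR.eq_of_mem (toList_get_mem R j₁) (toList_get_mem R j₂)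
    ((hc j₁).mem_subset h₁ ha) ((hc j₂).mem_subset h₂ ha)

lemma isPart_biUnion (hR : IsPart Finset.univ R)
    (hc : ∀ j, IsPart (R.toList.get j) (c j)) :
    IsPart Finset.univ (Finset.univ.biUnion c) := by
  apply isPart_of
  · intro h
    obtain ⟨j, _, hj⟩ := Finset.mem_biUnion.mp h
    exact (hc j).1 hj
  · intro T _; exact Finset.subset_univ T
  · intro a _
    obtain ⟨T', hT'R, haT'⟩ := hR.exists_mem (Finset.mem_univ a)
    obtain ⟨j, rfl⟩ := exists_toList_get hT'R
    obtain ⟨T, hT, haT⟩ := (hc j).exists_mem haT'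
    exact ⟨T, Finset.mem_biUnion.mpr ⟨j, Finset.mem_univ j, hT⟩, haT⟩
  · intro a T₁ T₂ h₁ h₂ ha₁ ha₂
    obtain ⟨j₁, _, hj₁⟩ := Finset.mem_biUnion.mp h₁
    obtain ⟨j₂, _, hj₂⟩ := Finset.mem_biUnion.mp h₂
    have hj : j₁ = j₂ := by
      apply toList_get_injective R
      exact hR.eq_of_mem (toList_get_mem R j₁) (toList_get_mem R j₂)
        ((hc j₁).mem_subset hj₁ ha₁) ((hc j₂).mem_subset hj₂ ha₂)
    subst hj
    exact (hc j₁).eq_of_mem hj₁ hj₂ ha₁ ha₂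

lemma filter_biUnion_eq (hR : IsPart Finset.univ R)
    (hc : ∀ j, IsPart (R.toList.get j) (c j)) (j : Fin R.toList.length) :
    (Finset.univ.biUnion c).filter (fun T => T ⊆ R.toList.get j) = c j := by
  ext T
  rw [Finset.mem_filter, Finset.mem_biUnion]
  constructor
  · rintro ⟨⟨j', _, hj'⟩, hsub⟩
    obtain ⟨a, ha⟩ := (hc j').nonempty_mem hj'
    have : j' = j := by
      apply toList_get_injective R
      exact hR.eq_of_mem (toList_get_mem R j') (toList_get_mem R j)
        ((hc j').mem_subset hj' ha) (hsub ha)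
    exact this ▸ hj'
  · intro hT
    exact ⟨⟨j, Finset.mem_univ j, hT⟩, (hc j).mem_subset hT⟩

end Ungrouping


/-! #### Generic partitions (of arbitrary finsets) -/

def IsPartG {ι : Type*} [DecidableEq ι] (S : Finset ι) (P : Finset (Finset ι)) : Prop :=
  (∅ ∉ P) ∧ (∀ T ∈ P, T ⊆ S) ∧ ∀ a ∈ S, (P.filter fun s => a ∈ s).card = 1

lemma IsPart.toG {n : ℕ} {S : Finset (Fin n)} {P : Finset (Finset (Fin n))}
    (hP : IsPart S P) : IsPartG S P := hP

lemma IsPartG.toPart {n : ℕ} {S : Finset (Fin n)} {P : Finset (Finset (Fin n))}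
    (hP : IsPartG S P) : IsPart S P := hP

namespace IsPartG

variable {ι : Type*} [DecidableEq ι] {S : Finset ι} {P : Finset (Finset ι)}

lemma nonempty_mem (hP : IsPartG S P) {T} (hT : T ∈ P) : T.Nonempty := by
  rcases Finset.eq_empty_or_nonempty T with h | h
  · exact absurd (h ▸ hT) hP.1
  · exact h

lemma mem_subset (hP : IsPartG S P) {T} (hT : T ∈ P) : T ⊆ S := hP.2.1 T hT

lemma exists_mem (hP : IsPartG S P) {a} (ha : a ∈ S) : ∃ T ∈ P, a ∈ T := by
  have h := hP.2.2 a ha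
  have hpos : 0 < (P.filter fun s => a ∈ s).card := by omega
  obtain ⟨T, hT⟩ := Finset.card_pos.mp hpos
  exact ⟨T, (Finset.mem_filter.mp hT).1, (Finset.mem_filter.mp hT).2⟩

lemma eq_of_mem (hP : IsPartG S P) {a : ι} {T₁ T₂} (h₁ : T₁ ∈ P) (h₂ : T₂ ∈ P)
    (ha₁ : a ∈ T₁) (ha₂ : a ∈ T₂) : T₁ = T₂ := by
  have ha : a ∈ S := hP.2.1 T₁ h₁ ha₁
  exact Finset.card_le_one.mp (le_of_eq (hP.2.2 a ha))
    T₁ (Finset.mem_filter.mpr ⟨h₁, ha₁⟩) T₂ (Finset.mem_filter.mpr ⟨h₂, ha₂⟩)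

lemma biUnion_id (hP : IsPartG S P) : P.biUnion id = S := by
  ext a
  rw [Finset.mem_biUnion]
  constructor
  · rintro ⟨T, hT, haT⟩
    exact hP.mem_subset hT haT
  · intro ha
    obtain ⟨T, hT, haT⟩ := hP.exists_mem ha
    exact ⟨T, hT, haT⟩

end IsPartG

lemma isPartG_of {ι : Type*} [DecidableEq ι] {S : Finset ι} {P : Finset (Finset ι)}
    (h0 : ∅ ∉ P) (hsub : ∀ T ∈ P, T ⊆ S)
    (hex : ∀ a ∈ S, ∃ T ∈ P, a ∈ T)
    (huniq : ∀ (a : ι) (T₁ T₂ : Finset ι), T₁ ∈ P → T₂ ∈ P → a ∈ T₁ → a ∈ T₂ → T₁ = T₂) :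
    IsPartG S P := by
  refine ⟨h0, hsub, fun a ha => ?_⟩
  obtain ⟨T, hT, haT⟩ := hex a ha
  rw [Finset.card_eq_one]
  exact ⟨T, Finset.eq_singleton_iff_unique_mem.mpr ⟨Finset.mem_filter.mpr ⟨hT, haT⟩,
    fun T' hT' => huniq a T' T (Finset.mem_filter.mp hT').1 hT (Finset.mem_filter.mp hT').2 haT⟩⟩

/-- Partitions of a finite set of "parts", as a `Finset`. -/
noncomputable def partitionsG {n : ℕ} (P : Finset (Finset (Fin n))) :
    Finset (Finset (Finset (Finset (Fin n)))) :=
  Finset.univ.filter (fun Q => (∅ ∉ Q) ∧ (∀ T ∈ Q, T ⊆ P) ∧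
    ∀ a ∈ P, (Q.filter fun s => a ∈ s).card = 1)

lemma mem_partitionsG {n : ℕ} {P : Finset (Finset (Fin n))}
    {Q : Finset (Finset (Finset (Fin n)))} :
    Q ∈ partitionsG P ↔ IsPartG P Q := by
  simp [partitionsG, IsPartG]

/-! #### Unions of sets of parts -/

section VUnion

variable {n : ℕ} {P : Finset (Finset (Fin n))}

/-- The union of a collection of parts. -/
def V (G : Finset (Finset (Fin n))) : Finset (Fin n) := G.biUnion id

lemma mem_V {G : Finset (Finset (Fin n))} {a : Fin n} :
    a ∈ V G ↔ ∃ T ∈ G, a ∈ T := Finset.mem_biUnion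

lemma subset_V {G : Finset (Finset (Fin n))} {T : Finset (Fin n)} (hT : T ∈ G) :
    T ⊆ V G := fun _ ha => mem_V.mpr ⟨T, hT, ha⟩

lemma mem_V_iff (hP : IsPart Finset.univ P) {G : Finset (Finset (Fin n))}
    (hG : G ⊆ P) {a : Fin n} {T : Finset (Fin n)} (hTP : T ∈ P) (haT : a ∈ T) :
    a ∈ V G ↔ T ∈ G := by
  constructor
  · intro h
    obtain ⟨T', hT', haT'⟩ := mem_V.mp h
    rwa [hP.eq_of_mem hTP (hG hT') haT haT']
  · intro h
    exact subset_V h haT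

lemma key_filter_V (hP : IsPart Finset.univ P) {G : Finset (Finset (Fin n))}
    (hG : G ⊆ P) : P.filter (fun T' => T' ⊆ V G) = G := by
  ext T'
  rw [Finset.mem_filter]
  constructor
  · rintro ⟨hT'P, hsub⟩
    obtain ⟨a, ha⟩ := hP.nonempty_mem hT'P
    exact (mem_V_iff hP hG hT'P ha).mp (hsub ha)
  · intro h
    exact ⟨hG h, subset_V h⟩

lemma V_inj_of_subset (hP : IsPart Finset.univ P) {G₁ G₂ : Finset (Finset (Fin n))}
    (h₁ : G₁ ⊆ P) (h₂ : G₂ ⊆ P) (h : V G₁ = V G₂) : G₁ = G₂ := by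
  rw [← key_filter_V hP h₁, ← key_filter_V hP h₂, h]

lemma isPart_V (hP : IsPart Finset.univ P) {G : Finset (Finset (Fin n))}
    (hG : G ⊆ P) : IsPart (V G) G := by
  apply isPart_of
  · intro h; exact hP.1 (hG h)
  · intro T hT; exact subset_V hT
  · intro a ha
    exact mem_V.mp ha
  · intro a T₁ T₂ hT₁ hT₂ ha₁ ha₂
    exact hP.eq_of_mem (hG hT₁) (hG hT₂) ha₁ ha₂

lemma V_nonempty (hP : IsPart Finset.univ P) {G : Finset (Finset (Fin n))}
    (hG : G ⊆ P) (hne : G.Nonempty) : (V G).Nonempty := by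
  obtain ⟨T, hT⟩ := hne
  obtain ⟨a, ha⟩ := hP.nonempty_mem (hG hT)
  exact ⟨a, subset_V hT ha⟩

lemma isPart_image_V (hP : IsPart Finset.univ P)
    {Q : Finset (Finset (Finset (Fin n)))} (hQ : IsPartG P Q) :
    IsPart Finset.univ (Q.image V) := by
  apply isPart_of
  · intro h
    obtain ⟨G, hG, hGe⟩ := Finset.mem_image.mp h
    exact Finset.Nonempty.ne_empty
      (V_nonempty hP (hQ.mem_subset hG) (hQ.nonempty_mem hG)) hGe
  · intro T _; exact Finset.subset_univ T
  · intro a _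
    obtain ⟨T, hTP, haT⟩ := hP.exists_mem (Finset.mem_univ a)
    obtain ⟨G, hGQ, hTG⟩ := hQ.exists_mem hTP
    exact ⟨V G, Finset.mem_image_of_mem _ hGQ, subset_V hTG haT⟩
  · intro a T₁ T₂ h₁ h₂ ha₁ ha₂
    obtain ⟨G₁, hG₁, rfl⟩ := Finset.mem_image.mp h₁
    obtain ⟨G₂, hG₂, rfl⟩ := Finset.mem_image.mp h₂
    obtain ⟨T, hTP, haT⟩ := hP.exists_mem (Finset.mem_univ a)
    have m₁ : T ∈ G₁ := (mem_V_iff hP (hQ.mem_subset hG₁) hTP haT).mp ha₁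
    have m₂ : T ∈ G₂ := (mem_V_iff hP (hQ.mem_subset hG₂) hTP haT).mp ha₂
    rw [hQ.eq_of_mem hG₁ hG₂ m₁ m₂]

end VUnion


/-! #### Transport between partitions of `Fin (P.toList.length)` and partitions of `P` -/

section QTransport

variable {n : ℕ} {P : Finset (Finset (Fin n))}

/-- Push a partition of indices forward to a partition of the set of parts. -/
noncomputable def mapQ (P : Finset (Finset (Fin n))) (Q : Finset (Finset (Fin P.toList.length))) :
    Finset (Finset (Finset (Fin n))) :=
  Q.image (fun T => T.image P.toList.get)

noncomputable def preQ (P : Finset (Finset (Fin n))) (Q' : Finset (Finset (Finset (Fin n)))) :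
    Finset (Finset (Fin P.toList.length)) :=
  Q'.image (fun G => Finset.univ.filter (fun t => P.toList.get t ∈ G))

lemma mem_image_get_iff {T : Finset (Fin P.toList.length)} {t : Fin P.toList.length} :
    P.toList.get t ∈ T.image P.toList.get ↔ t ∈ T := by
  constructor
  · intro h
    obtain ⟨t', ht', he⟩ := Finset.mem_image.mp h
    rwa [← toList_get_injective P he]
  · exact fun h => Finset.mem_image_of_mem _ h

lemma filter_image_get (T : Finset (Fin P.toList.length)) :
    Finset.univ.filter (fun t => P.toList.get t ∈ T.image P.toList.get) = T := by
  ext t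
  rw [Finset.mem_filter]
  simp only [Finset.mem_univ, true_and]
  exact mem_image_get_iff

lemma image_get_filter {G : Finset (Finset (Fin n))} (hG : G ⊆ P) :
    (Finset.univ.filter (fun t => P.toList.get t ∈ G)).image P.toList.get = G := by
  ext T
  rw [Finset.mem_image]
  constructor
  · rintro ⟨t, ht, rfl⟩
    exact (Finset.mem_filter.mp ht).2
  · intro hT
    obtain ⟨t, rfl⟩ := exists_toList_get (hG hT)
    exact ⟨t, Finset.mem_filter.mpr ⟨Finset.mem_univ t, hT⟩, rfl⟩

lemma preQ_mapQ (Q : Finset (Finset (Fin P.toList.length))) : preQ P (mapQ P Q) = Q := by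
  unfold preQ mapQ
  rw [Finset.image_image]
  have : ∀ T ∈ Q, ((fun G => Finset.univ.filter (fun t => P.toList.get t ∈ G)) ∘
      (fun T => T.image P.toList.get)) T = id T := by
    intro T _
    simp only [Function.comp_apply, id_eq]
    exact filter_image_get T
  rw [Finset.image_congr (by intro T hT; exact this T hT), Finset.image_id]

lemma mapQ_preQ {Q' : Finset (Finset (Finset (Fin n)))} (hQ' : IsPartG P Q') :
    mapQ P (preQ P Q') = Q' := by
  unfold preQ mapQ
  rw [Finset.image_image]
  have : ∀ G ∈ Q', ((fun T => T.image P.toList.get) ∘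
      (fun G => Finset.univ.filter (fun t => P.toList.get t ∈ G))) G = id G := by
    intro G hG
    simp only [Function.comp_apply, id_eq]
    exact image_get_filter (hQ'.mem_subset hG)
  rw [Finset.image_congr (by intro G hG; exact this G hG), Finset.image_id]

lemma mapQ_isPartG {Q : Finset (Finset (Fin P.toList.length))}
    (hQ : IsPart Finset.univ Q) : IsPartG P (mapQ P Q) := by
  apply isPartG_of
  · intro h
    obtain ⟨T, hT, hTe⟩ := Finset.mem_image.mp h
    rw [Finset.image_eq_empty.mp hTe] at hT
    exact hQ.1 hT
  · intro G hG
    obtain ⟨T, _, rfl⟩ := Finset.mem_image.mp hG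
    intro T' hT'
    obtain ⟨t, _, rfl⟩ := Finset.mem_image.mp hT'
    exact toList_get_mem P t
  · intro T hTP
    obtain ⟨t, rfl⟩ := exists_toList_get hTP
    obtain ⟨T', hT'Q, htT'⟩ := hQ.exists_mem (Finset.mem_univ t)
    exact ⟨T'.image P.toList.get, Finset.mem_image_of_mem _ hT'Q,
      Finset.mem_image_of_mem _ htT'⟩
  · intro T G₁ G₂ h₁ h₂ hT₁ hT₂
    obtain ⟨T₁, hT₁Q, rfl⟩ := Finset.mem_image.mp h₁
    obtain ⟨T₂, hT₂Q, rfl⟩ := Finset.mem_image.mp h₂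
    obtain ⟨t₁, ht₁, rfl⟩ := Finset.mem_image.mp hT₁
    have ht₂ : t₁ ∈ T₂ := mem_image_get_iff.mp hT₂
    rw [hQ.eq_of_mem hT₁Q hT₂Q ht₁ ht₂]

lemma preQ_isPart {Q' : Finset (Finset (Finset (Fin n)))} (hQ' : IsPartG P Q') :
    IsPart Finset.univ (preQ P Q') := by
  apply isPart_of
  · intro h
    obtain ⟨G, hG, hGe⟩ := Finset.mem_image.mp h
    have : G = ∅ := by
      rw [← image_get_filter (hQ'.mem_subset hG), hGe]
      simp
    exact hQ'.1 (this ▸ hG)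
  · intro T _; exact Finset.subset_univ T
  · intro t _
    obtain ⟨G, hG, hgetG⟩ := hQ'.exists_mem (toList_get_mem P t)
    exact ⟨Finset.univ.filter (fun t' => P.toList.get t' ∈ G),
      Finset.mem_image_of_mem _ hG,
      Finset.mem_filter.mpr ⟨Finset.mem_univ t, hgetG⟩⟩
  · intro t T₁ T₂ h₁ h₂ ht₁ ht₂
    obtain ⟨G₁, hG₁, rfl⟩ := Finset.mem_image.mp h₁
    obtain ⟨G₂, hG₂, rfl⟩ := Finset.mem_image.mp h₂
    have m₁ : P.toList.get t ∈ G₁ := (Finset.mem_filter.mp ht₁).2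
    have m₂ : P.toList.get t ∈ G₂ := (Finset.mem_filter.mp ht₂).2
    rw [hQ'.eq_of_mem hG₁ hG₂ m₁ m₂]

end QTransport


/-! #### Associativity -/

/-- The double-composition term attached to a partition-of-parts. -/
noncomputable def hterm {Z A B Cb Db : C.Obj} (h : FaaHom C Cb Db) (g : FaaHom C B Cb)
    (f : FaaHom C A B) {n : ℕ} (x : Fin (n + 1) → C.Hom Z A)
    (Q' : Finset (Finset (Finset (Fin n)))) : C.Hom Z Db :=
  C.comp (h Q'.toList.length) (C.toCDCData.tupleD Q'.toList.length
    (Fin.cases (C.comp (g 0) (C.comp (f 0) (x 0))) (fun j => gev g f x (Q'.toList.get j))))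

/-- The double-composition term attached to a refinement family. -/
noncomputable def rterm {Z A B Cb Db : C.Obj} (h : FaaHom C Cb Db) (g : FaaHom C B Cb)
    (f : FaaHom C A B) {n : ℕ} (x : Fin (n + 1) → C.Hom Z A)
    (R : Finset (Finset (Fin n))) (c : Fin R.toList.length → Finset (Finset (Fin n))) :
    C.Hom Z Db :=
  C.comp (h R.toList.length) (C.toCDCData.tupleD R.toList.length
    (Fin.cases (C.comp (g 0) (C.comp (f 0) (x 0))) (fun j => gev g f x (c j))))

lemma faaComp_zero_comp {A B Cb : C.Obj} {g : FaaHom C B Cb} (hg : IsFaa C g)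
    (f : FaaHom C A B) {Z : C.Obj} (x0 : C.Hom Z A) :
    C.comp ((faaComp C g f) 0) x0 = C.comp (g 0) (C.comp (f 0) x0) := by
  have h1 : C.comp ((faaComp C g f) 0) x0
      = C.comp ((faaComp C g f) 0) (C.toCDCData.tupleD 0 (fun _ : Fin 1 => x0)) := rfl
  rw [h1, top_eval, partitions_zero, Finset.sum_singleton, gev_empty hg]

lemma gev_middle {A B Cb : C.Obj} {g : FaaHom C B Cb} (hg : IsFaa C g)
    {f : FaaHom C A B} {Z : C.Obj} {n : ℕ} (x : Fin (n + 1) → C.Hom Z A)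
    (P : Finset (Finset (Fin n))) (T : Finset (Fin P.toList.length)) :
    phiF g (Fin.cases (C.comp (f 0) (x 0)) (fun j => phiF f x (P.toList.get j))) T
      = gev g f x (T.image P.toList.get) := by
  rw [phiF_def]
  have hfun : (Fin.cases
      ((Fin.cases (C.comp (f 0) (x 0)) (fun j => phiF f x (P.toList.get j)) :
        Fin (P.toList.length + 1) → C.Hom Z B) 0)
      (fun j => (Fin.cases (C.comp (f 0) (x 0)) (fun j => phiF f x (P.toList.get j)) :
        Fin (P.toList.length + 1) → C.Hom Z B) (enum T j).succ) :
      Fin (T.card + 1) → C.Hom Z B)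
      = Fin.cases (C.comp (f 0) (x 0))
          (fun j => phiF f x (P.toList.get (enum T j))) := by
    funext i
    cases i using Fin.cases with
    | zero => simp
    | succ j => simp
  rw [hfun]
  refine gev_eq_of_enum hg f x (fun j => P.toList.get (enum T j))
    ((toList_get_injective P).comp (enum_injective T)) ?_
  intro G
  constructor
  · rintro ⟨j, rfl⟩
    exact Finset.mem_image_of_mem _ (enum_mem T j)
  · intro hG
    obtain ⟨t, ht, rfl⟩ := Finset.mem_image.mp hG
    obtain ⟨j, rfl⟩ := exists_enum ht
    exact ⟨j, rfl⟩

lemma phiF_faaComp {A B Cb : C.Obj} {g : FaaHom C B Cb} {f : FaaHom C A B}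
    (hg : IsFaa C g) (hf : IsFaa C f) {Z : C.Obj} {n : ℕ}
    (x : Fin (n + 1) → C.Hom Z A) (S : Finset (Fin n)) :
    phiF (faaComp C g f) x S = ∑ P ∈ partitionsOn S, gev g f x P :=
  (fIdxF_comp (faaComp C g f) S x).symm.trans (local_eval hg hf x S)

lemma htermQ_eq {A B Cb Db : C.Obj} {h : FaaHom C Cb Db} (hh : IsFaa C h)
    (g : FaaHom C B Cb) (f : FaaHom C A B) {Z : C.Obj} {n : ℕ}
    (x : Fin (n + 1) → C.Hom Z A) (P : Finset (Finset (Fin n)))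
    (Q : Finset (Finset (Fin P.toList.length))) :
    C.comp (h Q.toList.length) (C.toCDCData.tupleD Q.toList.length
      (Fin.cases (C.comp (g 0) (C.comp (f 0) (x 0)))
        (fun j' => gev g f x ((Q.toList.get j').image P.toList.get))))
      = hterm h g f x (mapQ P Q) := by
  unfold hterm
  refine master hh _ (gev g f x) (fun j' => (Q.toList.get j').image P.toList.get)
    ((mapQ P Q).toList.get)
    ((Finset.image_injective (toList_get_injective P)).comp (toList_get_injective Q))
    (toList_get_injective (mapQ P Q)) ?_
  intro G
  constructor
  · rintro ⟨j', rfl⟩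
    exact exists_toList_get (Finset.mem_image_of_mem _ (toList_get_mem Q j'))
  · rintro ⟨j, rfl⟩
    have : (mapQ P Q).toList.get j ∈ mapQ P Q := toList_get_mem _ j
    obtain ⟨T, hT, hTe⟩ := Finset.mem_image.mp this
    obtain ⟨j', rfl⟩ := exists_toList_get hT
    exact ⟨j', hTe⟩

lemma rterm_eq {A B Cb Db : C.Obj} {h : FaaHom C Cb Db} (hh : IsFaa C h)
    (g : FaaHom C B Cb) (f : FaaHom C A B) {Z : C.Obj} {n : ℕ}
    (x : Fin (n + 1) → C.Hom Z A) {R : Finset (Finset (Fin n))}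
    {c : Fin R.toList.length → Finset (Finset (Fin n))}
    (hR : IsPart Finset.univ R) (hc : ∀ j, IsPart (R.toList.get j) (c j)) :
    rterm h g f x R c = hterm h g f x (Finset.univ.image c) := by
  have hcinj : Function.Injective c := by
    intro j₁ j₂ he
    obtain ⟨a, ha⟩ := hR.nonempty_mem (toList_get_mem R j₁)
    obtain ⟨T, hT, _⟩ := (hc j₁).exists_mem ha
    exact unique_j hR hc hT (he ▸ hT)
  unfold rterm hterm
  refine master hh _ (gev g f x) c ((Finset.univ.image c).toList.get) hcinj
    (toList_get_injective _) ?_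
  intro G
  constructor
  · rintro ⟨j, rfl⟩
    exact exists_toList_get (Finset.mem_image_of_mem _ (Finset.mem_univ j))
  · rintro ⟨j, rfl⟩
    have : (Finset.univ.image c).toList.get j ∈ Finset.univ.image c := toList_get_mem _ j
    obtain ⟨j', _, hj'⟩ := Finset.mem_image.mp this
    exact ⟨j', hj'⟩

lemma R_recover {n : ℕ} {R : Finset (Finset (Fin n))}
    {c : Fin R.toList.length → Finset (Finset (Fin n))}
    (hc : ∀ j, IsPart (R.toList.get j) (c j)) :
    (Finset.univ.image c).image V = R := by
  rw [Finset.image_image]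
  have hco : ∀ j ∈ Finset.univ, (V ∘ c) j = R.toList.get j := by
    intro j _
    exact (hc j).toG.biUnion_id
  rw [Finset.image_congr hco, univ_image_get]


lemma assoc_eval {A B Cb Db : C.Obj} {h : FaaHom C Cb Db} {g : FaaHom C B Cb}
    {f : FaaHom C A B} (hh : IsFaa C h) (hg : IsFaa C g) (hf : IsFaa C f)
    {Z : C.Obj} {n : ℕ} (x : Fin (n + 1) → C.Hom Z A) :
    C.comp ((faaComp C (faaComp C h g) f) n) (C.toCDCData.tupleD n x)
      = C.comp ((faaComp C h (faaComp C g f)) n) (C.toCDCData.tupleD n x) := by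
  rw [top_eval, top_eval]
  have hL : ∀ P ∈ partitions n,
      gev (faaComp C h g) f x P = ∑ Q' ∈ partitionsG P, hterm h g f x Q' := by
    intro P _
    unfold gev
    rw [top_eval]
    refine Finset.sum_nbij' (mapQ P) (preQ P) ?_ ?_ ?_ ?_ ?_
    · intro Q hQ
      exact mem_partitionsG.mpr (mapQ_isPartG (mem_partitions.mp hQ))
    · intro Q' hQ'
      exact mem_partitions.mpr (preQ_isPart (mem_partitionsG.mp hQ'))
    · intro Q _
      exact preQ_mapQ Q
    · intro Q' hQ'
      exact mapQ_preQ (mem_partitionsG.mp hQ')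
    · intro Q _
      unfold gev
      have hfun : (Fin.cases
          (C.comp (g 0) ((Fin.cases (C.comp (f 0) (x 0))
            (fun j => phiF f x (P.toList.get j)) :
              Fin (P.toList.length + 1) → C.Hom Z B) 0))
          (fun j' => phiF g (Fin.cases (C.comp (f 0) (x 0))
            (fun j => phiF f x (P.toList.get j))) (Q.toList.get j')) :
            Fin (Q.toList.length + 1) → C.Hom Z Cb)
          = Fin.cases (C.comp (g 0) (C.comp (f 0) (x 0)))
              (fun j' => gev g f x ((Q.toList.get j').image P.toList.get)) := by
        funext i
        cases i using Fin.cases with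
        | zero => rfl
        | succ j' =>
            simp only [Fin.cases_succ]
            exact gev_middle hg x P _
      rw [hfun]
      exact htermQ_eq hh g f x P Q
  have hRs : ∀ R ∈ partitions n,
      gev h (faaComp C g f) x R
        = ∑ c ∈ Fintype.piFinset (fun j => partitionsOn (R.toList.get j)),
            rterm h g f x R c := by
    intro R _
    unfold gev
    have hfun : (Fin.cases (C.comp ((faaComp C g f) 0) (x 0))
        (fun j => phiF (faaComp C g f) x (R.toList.get j)) :
          Fin (R.toList.length + 1) → C.Hom Z Cb)
        = Fin.cases (C.comp (g 0) (C.comp (f 0) (x 0)))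
            (fun j => ∑ P' ∈ partitionsOn (R.toList.get j), gev g f x P') := by
      funext i
      cases i using Fin.cases with
      | zero =>
          simp only [Fin.cases_zero]
          exact faaComp_zero_comp hg f (x 0)
      | succ j =>
          simp only [Fin.cases_succ]
          exact phiF_faaComp hg hf x _
    rw [hfun]
    exact (mel hh R.toList.length (C.comp (g 0) (C.comp (f 0) (x 0)))).map_sum_finset
      (fun _ P' => gev g f x P') (fun j => partitionsOn (R.toList.get j))
  rw [Finset.sum_congr rfl hL, Finset.sum_congr rfl hRs,
    Finset.sum_sigma', Finset.sum_sigma']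
  refine (Finset.sum_bij
    (fun (a : Σ _ : Finset (Finset (Fin n)), Fin (Finset.toList _).length → Finset (Finset (Fin n))) _ =>
      (⟨Finset.univ.biUnion a.2, Finset.univ.image a.2⟩ :
        Σ _ : Finset (Finset (Fin n)), Finset (Finset (Finset (Fin n)))))
    ?_ ?_ ?_ ?_).symm
  · -- membership
    rintro ⟨R, c⟩ ha
    obtain ⟨hRm, hcm⟩ := Finset.mem_sigma.mp ha
    have hRi := mem_partitions.mp hRm
    have hcall : ∀ j, IsPart (R.toList.get j) (c j) :=
      fun j => mem_partitionsOn.mp (Fintype.mem_piFinset.mp hcm j)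
    refine Finset.mem_sigma.mpr ⟨mem_partitions.mpr (isPart_biUnion hRi hcall),
      mem_partitionsG.mpr ?_⟩
    apply isPartG_of
    · intro hmem
      obtain ⟨j, _, hj⟩ := Finset.mem_image.mp hmem
      obtain ⟨a, haj⟩ := hRi.nonempty_mem (toList_get_mem R j)
      obtain ⟨T, hT, _⟩ := (hcall j).exists_mem haj
      have hj' : c j = ∅ := hj
      rw [hj'] at hT
      simp at hT
    · intro G hG
      obtain ⟨j, _, rfl⟩ := Finset.mem_image.mp hG
      intro T hT
      exact Finset.mem_biUnion.mpr ⟨j, Finset.mem_univ j, hT⟩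
    · intro T hT
      obtain ⟨j, _, hTj⟩ := Finset.mem_biUnion.mp hT
      exact ⟨c j, Finset.mem_image_of_mem _ (Finset.mem_univ j), hTj⟩
    · intro T G₁ G₂ h₁ h₂ hT₁ hT₂
      obtain ⟨j₁, _, rfl⟩ := Finset.mem_image.mp h₁
      obtain ⟨j₂, _, rfl⟩ := Finset.mem_image.mp h₂
      rw [unique_j hRi hcall hT₁ hT₂]
  · -- injectivity
    rintro ⟨R₁, c₁⟩ ha₁ ⟨R₂, c₂⟩ ha₂ heq
    obtain ⟨hR₁m, hc₁m⟩ := Finset.mem_sigma.mp ha₁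
    obtain ⟨hR₂m, hc₂m⟩ := Finset.mem_sigma.mp ha₂
    have hc₁all : ∀ j, IsPart (R₁.toList.get j) (c₁ j) :=
      fun j => mem_partitionsOn.mp (Fintype.mem_piFinset.mp hc₁m j)
    have hc₂all : ∀ j, IsPart (R₂.toList.get j) (c₂ j) :=
      fun j => mem_partitionsOn.mp (Fintype.mem_piFinset.mp hc₂m j)
    have h2 : Finset.univ.image c₁ = Finset.univ.image c₂ :=
      congrArg (fun p : (Σ _ : Finset (Finset (Fin n)), Finset (Finset (Finset (Fin n)))) => p.snd) heq
    have h1 : R₁ = R₂ := by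
      rw [← R_recover hc₁all, ← R_recover hc₂all, h2]
    subst h1
    have hc : c₁ = c₂ := by
      funext j
      have hmem : c₁ j ∈ Finset.univ.image c₂ :=
        h2 ▸ Finset.mem_image_of_mem c₁ (Finset.mem_univ j)
      obtain ⟨j', _, he⟩ := Finset.mem_image.mp hmem
      have hV : R₁.toList.get j' = R₁.toList.get j := by
        rw [← (hc₂all j').toG.biUnion_id, ← (hc₁all j).toG.biUnion_id, he]
      rw [← he, toList_get_injective R₁ hV]
    rw [hc]
  · -- surjectivity
    rintro ⟨P, Q'⟩ hb
    obtain ⟨hPm, hQ'm⟩ := Finset.mem_sigma.mp hb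
    have hPi := mem_partitions.mp hPm
    have hQ'i := mem_partitionsG.mp hQ'm
    refine ⟨⟨Q'.image V, fun j => P.filter (fun T => T ⊆ (Q'.image V).toList.get j)⟩,
      ?_, ?_⟩
    · refine Finset.mem_sigma.mpr ⟨mem_partitions.mpr (isPart_image_V hPi hQ'i),
        Fintype.mem_piFinset.mpr ?_⟩
      intro j
      show P.filter (fun T => T ⊆ (Q'.image V).toList.get j)
        ∈ partitionsOn ((Q'.image V).toList.get j)
      obtain ⟨G, hG, hVG⟩ := Finset.mem_image.mp (toList_get_mem (Q'.image V) j)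
      have hfe : P.filter (fun T => T ⊆ (Q'.image V).toList.get j) = G := by
        rw [← hVG]
        exact key_filter_V hPi (hQ'i.mem_subset hG)
      apply mem_partitionsOn.mpr
      rw [hfe, ← hVG]
      exact isPart_V hPi (hQ'i.mem_subset hG)
    · refine Sigma.ext ?_ (heq_of_eq ?_)
      · show Finset.univ.biUnion (fun j => P.filter (fun T => T ⊆ (Q'.image V).toList.get j)) = P
        ext T
        rw [Finset.mem_biUnion]
        constructor
        · rintro ⟨j, _, hT⟩
          exact (Finset.mem_filter.mp hT).1
        · intro hT
          obtain ⟨G, hGQ', hTG⟩ := hQ'i.exists_mem hT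
          obtain ⟨j, hj⟩ := exists_toList_get (Finset.mem_image_of_mem V hGQ')
          exact ⟨j, Finset.mem_univ j, Finset.mem_filter.mpr
            ⟨hT, by rw [hj]; exact subset_V hTG⟩⟩
      · show Finset.univ.image (fun j => P.filter (fun T => T ⊆ (Q'.image V).toList.get j)) = Q'
        ext G
        rw [Finset.mem_image]
        constructor
        · rintro ⟨j, _, rfl⟩
          obtain ⟨G', hG', hVG'⟩ := Finset.mem_image.mp (toList_get_mem (Q'.image V) j)
          have hfe : P.filter (fun T => T ⊆ (Q'.image V).toList.get j) = G' := by
            rw [← hVG']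
            exact key_filter_V hPi (hQ'i.mem_subset hG')
          rw [hfe]
          exact hG'
        · intro hG
          obtain ⟨j, hj⟩ := exists_toList_get (Finset.mem_image_of_mem V hG)
          refine ⟨j, Finset.mem_univ j, ?_⟩
          rw [hj]
          exact key_filter_V hPi (hQ'i.mem_subset hG)
  · -- terms
    rintro ⟨R, c⟩ ha
    obtain ⟨hRm, hcm⟩ := Finset.mem_sigma.mp ha
    exact rterm_eq hh g f x (mem_partitions.mp hRm)
      (fun j => mem_partitionsOn.mp (Fintype.mem_piFinset.mp hcm j))

lemma assoc {A B Cb Db : C.Obj} {h : FaaHom C Cb Db} {g : FaaHom C B Cb}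
    {f : FaaHom C A B} (hh : IsFaa C h) (hg : IsFaa C g) (hf : IsFaa C f) :
    faaComp C (faaComp C h g) f = faaComp C h (faaComp C g f) :=
  funext fun n => hom_ext (assoc_eval hh hg hf _)

end FaaAux

end Infra
/-!
STATEMENT 7: Given a cartesian left-`k`-linear category `𝒜`, the Faà di Bruno
category `Faà(𝒜)` — with the same objects as `𝒜`, morphisms `A ⇝ B` being
`ℕ`-indexed families `f⁽ⁿ⁾ : A × Aⁿ → B` each symmetric and `k`-linear in its
last `n` variables, identities `(id)⁽⁰⁾ = id`, `(id)⁽¹⁾ = π₁`, `(id)⁽ⁿ⁾ = 0`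
for `n ≥ 2`, and composition given by the Faà di Bruno formula — is a
category: composition and identities are well defined (preserve the symmetry
and multilinearity conditions) and satisfy the unit and associativity laws.
-/
theorem statement7 {k : Type u} [CommSemiring k] (C : CLC k) :
    (∀ (A B Cb : C.Obj) (g : FaaHom C B Cb) (f : FaaHom C A B),
        IsFaa C g → IsFaa C f → IsFaa C (faaComp C g f)) ∧
    (∀ A : C.Obj, IsFaa C (idF C A)) ∧
    (∀ (A B : C.Obj) (f : FaaHom C A B), IsFaa C f → faaComp C (idF C B) f = f) ∧
    (∀ (A B : C.Obj) (f : FaaHom C A B), IsFaa C f → faaComp C f (idF C A) = f) ∧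
    (∀ (A B Cb Db : C.Obj) (h : FaaHom C Cb Db) (g : FaaHom C B Cb)
        (f : FaaHom C A B), IsFaa C h → IsFaa C g → IsFaa C f →
        faaComp C (faaComp C h g) f = faaComp C h (faaComp C g f)) :=
  ⟨fun _ _ _ _ _ hg hf => FaaAux.isFaa_comp hg hf,
   fun A => FaaAux.isFaa_idF A,
   fun _ _ _ hf => FaaAux.left_unit hf,
   fun _ _ _ hf => FaaAux.right_unit hf,
   fun _ _ _ _ _ _ _ hh hg hf => FaaAux.assoc hh hg hf⟩
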